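/- arXiv:1507.04046 — 2 statements merged into one kernel-verified Lean document; each statement's English description precedes it below -/
import Mathlib

section
/- Let h ≥ 1, W ≥ 2 and a ≥ 1 be integers with a^h ∣ W. For every decoder d : List Bool → List Bool → ℕ and every family of encoders assigning to each (h,W,a)-configuration x an encoder e_x from length-h binary strings to List Bool satisfying d (e_x u) (e_x v) = D_x(u,v) for all u, v, there exist a configuration x and a length-h string u such that (e_x u).length ≥ (h/2)·log₂ W − (h·(h−1)/4)·log₂ a − 1. -/
set_option maxHeartbeats 1000000

/-- Longest common prefix of two binary strings. -/
def lcp : List Bool → List Bool → List Bool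
  | [], _ => []
  | _, [] => []
  | a :: u, b :: v => if a = b then a :: lcp u v else []

/-- An `(h,W,a)`-configuration: it assigns to each binary string `s` of length
`j < h` a natural number `x s < W / a ^ j`. -/
def IsConfig (h W a : ℕ) (x : List Bool → ℕ) : Prop :=
  ∀ s : List Bool, s.length < h → x s < W / a ^ s.length

/-- The leaf distance induced by an `(h,W,a)`-configuration `x` on binary
strings of length `h`. -/
def leafDist (h W a : ℕ) (x : List Bool → ℕ) (u v : List Bool) : ℕ :=
  if u = v then 0
  else 2 * x (lcp u v) + 2 * ∑ i ∈ Finset.Ico ((lcp u v).length + 1) h, W / a ^ i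

namespace HWA

open Finset

@[simp] lemma lcp_cons_same (b : Bool) (u v : List Bool) :
    lcp (b :: u) (b :: v) = b :: lcp u v := by simp [lcp]

lemma lcp_cons_ne {b c : Bool} (h : b ≠ c) (u v : List Bool) :
    lcp (b :: u) (c :: v) = [] := by simp [lcp, h]

/-! ### encoding of lists as numbers -/

def enc : List Bool → ℕ
  | [] => 1
  | b :: t => 2 * enc t + (if b then 1 else 0)

lemma enc_pos : ∀ l, 1 ≤ enc l
  | [] => le_refl _
  | b :: t => by
      have := enc_pos t
      simp only [enc]
      cases b <;> simp <;> omega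

lemma enc_lt : ∀ l : List Bool, enc l < 2 ^ (l.length + 1)
  | [] => by simp [enc]
  | b :: t => by
      have := enc_lt t
      simp only [enc, List.length_cons]
      have : 2 ^ (t.length + 1 + 1) = 2 * 2 ^ (t.length + 1) := by ring
      cases b <;> simp <;> omega

lemma enc_inj : ∀ l₁ l₂ : List Bool, enc l₁ = enc l₂ → l₁ = l₂
  | [], [], _ => rfl
  | [], b :: t, h => by
      exfalso; have := enc_pos t; simp only [enc] at h; cases b <;> simp at h <;> omega
  | b :: t, [], h => by
      exfalso; have := enc_pos t; simp only [enc] at h; cases b <;> simp at h <;> omega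
  | b :: t, b' :: t', h => by
      simp only [enc] at h
      have hb : b = b' := by
        cases b <;> cases b' <;> simp at h ⊢ <;> omega
      subst hb
      have ht : enc t = enc t' := by cases b <;> simp at h <;> omega
      rw [enc_inj t t' ht]

/-! ### leaves -/

def leaves : ℕ → Finset (List Bool)
  | 0 => {([] : List Bool)}
  | g + 1 => ((leaves g).image (List.cons false)) ∪ ((leaves g).image (List.cons true))

lemma mem_leaves : ∀ (g : ℕ) (w : List Bool), w ∈ leaves g ↔ w.length = g
  | 0, w => by
      constructor
      · intro hw; simp [leaves] at hw; simp [hw]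
      · intro hw
        simp only [leaves, mem_singleton]
        cases w with
        | nil => rfl
        | cons b t => simp at hw
  | g + 1, w => by
      constructor
      · intro hw
        simp only [leaves, mem_union, mem_image] at hw
        rcases hw with ⟨t, ht, rfl⟩ | ⟨t, ht, rfl⟩ <;>
          simp [ (mem_leaves g t).1 ht]
      · intro hw
        cases w with
        | nil => simp at hw
        | cons b t =>
          simp only [List.length_cons, Nat.succ_inj] at hw
          simp only [leaves, mem_union, mem_image]
          cases b
          · exact Or.inl ⟨t, (mem_leaves g t).2 hw, rfl⟩
          · exact Or.inr ⟨t, (mem_leaves g t).2 hw, rfl⟩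

lemma leaves_nonempty (g : ℕ) : (leaves g).Nonempty := by
  induction g with
  | zero => exact ⟨[], by simp [leaves]⟩
  | succ k ih =>
      obtain ⟨w, hw⟩ := ih
      refine ⟨false :: w, ?_⟩
      simp only [leaves, mem_union, mem_image]
      exact Or.inl ⟨w, hw, rfl⟩

lemma leaves_disjoint_images (g : ℕ) :
    Disjoint ((leaves g).image (List.cons false)) ((leaves g).image (List.cons true)) := by
  rw [Finset.disjoint_left]
  rintro a ha hb
  simp only [mem_image] at ha hb
  obtain ⟨t, _, rfl⟩ := ha
  obtain ⟨t', _, h⟩ := hb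
  simp at h

lemma prod_leaves_succ {M : Type*} [CommMonoid M] (g : ℕ) (F : List Bool → M) :
    ∏ w ∈ leaves (g + 1), F w
      = ∏ w ∈ leaves g, (F (false :: w) * F (true :: w)) := by
  have hinjf : Function.Injective (List.cons false (α := Bool)) := fun _ _ h => by simpa using h
  have hinjt : Function.Injective (List.cons true (α := Bool)) := fun _ _ h => by simpa using h
  rw [show leaves (g+1) = ((leaves g).image (List.cons false)) ∪ ((leaves g).image (List.cons true)) from rfl,
    Finset.prod_union (leaves_disjoint_images g),
    Finset.prod_image (fun a _ b _ h => hinjf h),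
    Finset.prod_image (fun a _ b _ h => hinjt h),
    ← Finset.prod_mul_distrib]

lemma card_leaves (g : ℕ) : (leaves g).card = 2 ^ g := by
  induction g with
  | zero => simp [leaves]
  | succ k ih =>
      have hinjf : Function.Injective (List.cons false (α := Bool)) := fun _ _ h => by simpa using h
      have hinjt : Function.Injective (List.cons true (α := Bool)) := fun _ _ h => by simpa using h
      rw [show leaves (k+1) = ((leaves k).image (List.cons false)) ∪ ((leaves k).image (List.cons true)) from rfl,
        Finset.card_union_of_disjoint (leaves_disjoint_images k),
        Finset.card_image_of_injective _ hinjf,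
        Finset.card_image_of_injective _ hinjt, ih]
      ring



noncomputable instance : DecidableEq (List Bool → ℕ) := Classical.decEq _

def glue (m : ℕ) (f₀ f₁ : List Bool → ℕ) : List Bool → ℕ
  | [] => m
  | b :: t => if b then f₁ t else f₀ t

@[simp] lemma glue_nil (m f₀ f₁) : glue m f₀ f₁ [] = m := rfl
@[simp] lemma glue_cons_false (m f₀ f₁ t) : glue m f₀ f₁ (false :: t) = f₀ t := rfl
@[simp] lemma glue_cons_true (m f₀ f₁ t) : glue m f₀ f₁ (true :: t) = f₁ t := rfl

def shift (V : ℕ → ℕ) : ℕ → ℕ := fun j => V (j + 1)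

noncomputable def Family : ℕ → (ℕ → ℕ) → Finset (List Bool → ℕ)
  | 0, _ => {fun _ => 0}
  | g + 1, V =>
      ((range (V 0)) ×ˢ ((Family g (shift V)) ×ˢ (Family g (shift V)))).image
        (fun p => glue p.1 p.2.1 p.2.2)

lemma mem_family_iff : ∀ (g : ℕ) (V : ℕ → ℕ) (x : List Bool → ℕ),
    x ∈ Family g V ↔
      ((∀ s : List Bool, s.length < g → x s < V s.length) ∧
       (∀ s : List Bool, g ≤ s.length → x s = 0))
  | 0, V, x => by
      constructor
      · intro hx
        simp only [Family, mem_singleton] at hx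
        subst hx
        exact ⟨fun s hs => (Nat.not_lt_zero _ hs).elim, fun s _ => rfl⟩
      · rintro ⟨-, h0⟩
        simp only [Family, mem_singleton]
        funext s
        exact h0 s (Nat.zero_le _)
  | g + 1, V, x => by
      constructor
      · intro hx
        simp only [Family, mem_image, mem_product, mem_range] at hx
        obtain ⟨⟨m, f₀, f₁⟩, ⟨hm, hf₀, hf₁⟩, rfl⟩ := hx
        have H₀ := (mem_family_iff g (shift V) f₀).1 hf₀
        have H₁ := (mem_family_iff g (shift V) f₁).1 hf₁
        constructor
        · intro s hs
          cases s with
          | nil => simpa using hm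
          | cons b t =>
            have ht : t.length < g := by simpa using hs
            cases b
            · simpa [shift] using H₀.1 t ht
            · simpa [shift] using H₁.1 t ht
        · intro s hs
          cases s with
          | nil => simp at hs
          | cons b t =>
            have ht : g ≤ t.length := by simpa using hs
            cases b
            · simpa using H₀.2 t ht
            · simpa using H₁.2 t ht
      · rintro ⟨h1, h2⟩
        simp only [Family, mem_image, mem_product, mem_range]
        refine ⟨⟨x [], fun t => x (false :: t), fun t => x (true :: t)⟩, ⟨?_, ?_, ?_⟩, ?_⟩
        · simpa using h1 [] (by simp)
        · refine (mem_family_iff g (shift V) _).2 ⟨fun t ht => ?_, fun t ht => ?_⟩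
          · simpa [shift] using h1 (false :: t) (by simpa using ht)
          · exact h2 (false :: t) (by simpa using ht)
        · refine (mem_family_iff g (shift V) _).2 ⟨fun t ht => ?_, fun t ht => ?_⟩
          · simpa [shift] using h1 (true :: t) (by simpa using ht)
          · exact h2 (true :: t) (by simpa using ht)
        · funext s
          cases s with
          | nil => rfl
          | cons b t => cases b <;> rfl

lemma family_nonempty (g : ℕ) (V : ℕ → ℕ) (hV : ∀ j, j < g → 0 < V j) :
    (Family g V).Nonempty := by
  refine ⟨fun _ => 0, (mem_family_iff g V _).2 ⟨fun s hs => hV _ hs, fun _ _ => rfl⟩⟩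

/-! ### iterated square root -/

noncomputable def sqrtIter : ℕ → ℝ → ℝ
  | 0, x => x
  | k + 1, x => Real.sqrt (sqrtIter k x)

lemma sqrtIter_nonneg : ∀ (k : ℕ) (x : ℝ), 0 ≤ x → 0 ≤ sqrtIter k x
  | 0, x, hx => hx
  | k + 1, x, _ => Real.sqrt_nonneg _

lemma sqrtIter_mono : ∀ (k : ℕ) {x y : ℝ}, x ≤ y → sqrtIter k x ≤ sqrtIter k y
  | 0, x, y, h => h
  | k + 1, x, y, h => Real.sqrt_le_sqrt (sqrtIter_mono k h)

lemma sqrtIter_mul : ∀ (k : ℕ) {x y : ℝ}, 0 ≤ x → 0 ≤ y →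
    sqrtIter k (x * y) = sqrtIter k x * sqrtIter k y
  | 0, x, y, _, _ => rfl
  | k + 1, x, y, hx, hy => by
      simp only [sqrtIter]
      rw [sqrtIter_mul k hx hy,
        Real.sqrt_mul (sqrtIter_nonneg k x hx) _]

lemma sqrtIter_pow : ∀ (k : ℕ) {z : ℝ}, 0 ≤ z → sqrtIter k (z ^ (2 ^ k)) = z
  | 0, z, _ => by simp [sqrtIter]
  | k + 1, z, hz => by
      simp only [sqrtIter]
      have h1 : z ^ (2 ^ (k + 1)) = (z ^ 2) ^ (2 ^ k) := by
        rw [← pow_mul]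
        ring_nf
      rw [h1, sqrtIter_pow k (by positivity), Real.sqrt_sq hz]

/-! ### Hölder via iterated Cauchy-Schwarz -/

lemma cs_sqrt (M : Finset ℕ) (x y : ℕ → ℝ) (hx : ∀ m ∈ M, 0 ≤ x m) (hy : ∀ m ∈ M, 0 ≤ y m) :
    (∑ m ∈ M, Real.sqrt (x m * y m)) ^ 2 ≤ (∑ m ∈ M, x m) * (∑ m ∈ M, y m) := by
  have h := Finset.sum_mul_sq_le_sq_mul_sq M (fun m => Real.sqrt (x m)) (fun m => Real.sqrt (y m))
  have h1 : ∀ m ∈ M, Real.sqrt (x m) * Real.sqrt (y m) = Real.sqrt (x m * y m) := by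
    intro m hm; rw [← Real.sqrt_mul (hx m hm)]
  have h2 : ∀ m ∈ M, Real.sqrt (x m) ^ 2 = x m := fun m hm => Real.sq_sqrt (hx m hm)
  have h3 : ∀ m ∈ M, Real.sqrt (y m) ^ 2 = y m := fun m hm => Real.sq_sqrt (hy m hm)
  rw [Finset.sum_congr rfl h1, Finset.sum_congr rfl h2, Finset.sum_congr rfl h3] at h
  exact h

lemma hoelder : ∀ (k : ℕ) (M : Finset ℕ) (f : List Bool → ℕ → ℝ),
    (∀ w m, 0 ≤ f w m) →
    (∑ m ∈ M, sqrtIter k (∏ w ∈ leaves k, f w m)) ^ (2 ^ k) ≤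
      ∏ w ∈ leaves k, (∑ m ∈ M, f w m)
  | 0, M, f, hf => by
      simp [leaves, sqrtIter]
  | k + 1, M, f, hf => by
      set A : ℕ → ℝ := fun m => ∏ w ∈ leaves k, f (false :: w) m with hA
      set B : ℕ → ℝ := fun m => ∏ w ∈ leaves k, f (true :: w) m with hB
      have hA0 : ∀ m, 0 ≤ A m := fun m => Finset.prod_nonneg (fun w _ => hf _ m)
      have hB0 : ∀ m, 0 ≤ B m := fun m => Finset.prod_nonneg (fun w _ => hf _ m)
      have hsplit : ∀ m, ∏ w ∈ leaves (k + 1), f w m = A m * B m := by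
        intro m
        rw [prod_leaves_succ k (fun w => f w m), Finset.prod_mul_distrib]
      have hinner : ∀ m, sqrtIter (k + 1) (∏ w ∈ leaves (k + 1), f w m)
          = Real.sqrt (sqrtIter k (A m) * sqrtIter k (B m)) := by
        intro m
        rw [hsplit m]
        simp only [sqrtIter]
        rw [sqrtIter_mul k (hA0 m) (hB0 m)]
      have hCS : (∑ m ∈ M, Real.sqrt (sqrtIter k (A m) * sqrtIter k (B m))) ^ 2
          ≤ (∑ m ∈ M, sqrtIter k (A m)) * (∑ m ∈ M, sqrtIter k (B m)) :=
        cs_sqrt M _ _ (fun m _ => sqrtIter_nonneg k _ (hA0 m)) (fun m _ => sqrtIter_nonneg k _ (hB0 m))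
      have hpow : (∑ m ∈ M, sqrtIter (k+1) (∏ w ∈ leaves (k+1), f w m)) ^ (2 ^ (k+1))
          = ((∑ m ∈ M, Real.sqrt (sqrtIter k (A m) * sqrtIter k (B m))) ^ 2) ^ (2 ^ k) := by
        rw [Finset.sum_congr rfl (fun m _ => hinner m), ← pow_mul]
        ring_nf
      rw [hpow]
      have hnn : (0:ℝ) ≤ (∑ m ∈ M, Real.sqrt (sqrtIter k (A m) * sqrtIter k (B m))) ^ 2 :=
        sq_nonneg _
      calc ((∑ m ∈ M, Real.sqrt (sqrtIter k (A m) * sqrtIter k (B m))) ^ 2) ^ (2 ^ k)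
          ≤ ((∑ m ∈ M, sqrtIter k (A m)) * (∑ m ∈ M, sqrtIter k (B m))) ^ (2 ^ k) :=
            pow_le_pow_left₀ hnn hCS _
        _ = (∑ m ∈ M, sqrtIter k (A m)) ^ (2^k) * (∑ m ∈ M, sqrtIter k (B m)) ^ (2^k) := by
            rw [mul_pow]
        _ ≤ (∏ w ∈ leaves k, (∑ m ∈ M, f (false :: w) m)) *
              (∏ w ∈ leaves k, (∑ m ∈ M, f (true :: w) m)) := by
            have h1 := hoelder k M (fun w m => f (false :: w) m) (fun w m => hf _ _)
            have h2 := hoelder k M (fun w m => f (true :: w) m) (fun w m => hf _ _)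
            have s1 : (0:ℝ) ≤ (∑ m ∈ M, sqrtIter k (A m)) ^ (2^k) := by
              apply pow_nonneg
              exact Finset.sum_nonneg (fun m _ => sqrtIter_nonneg k _ (hA0 m))
            have s2 : (0:ℝ) ≤ ∏ w ∈ leaves k, (∑ m ∈ M, f (false :: w) m) :=
              Finset.prod_nonneg (fun w _ => Finset.sum_nonneg (fun m _ => hf _ _))
            exact mul_le_mul h1 h2 (by
              apply pow_nonneg
              exact Finset.sum_nonneg (fun m _ => sqrtIter_nonneg k _ (hB0 m))) s2
        _ = ∏ w ∈ leaves (k+1), (∑ m ∈ M, f w m) := by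
            rw [prod_leaves_succ k (fun w => ∑ m ∈ M, f w m), Finset.prod_mul_distrib]


def mergeCfg (V : ℕ → ℕ) (m : ℕ) (ν : List Bool → ℕ) : List Bool → ℕ :=
  glue m (fun s => ν s % V (s.length + 1)) (fun s => ν s / V (s.length + 1))

@[simp] lemma mergeCfg_nil (V m ν) : mergeCfg V m ν [] = m := rfl
@[simp] lemma mergeCfg_false (V m ν t) :
    mergeCfg V m ν (false :: t) = ν t % V (t.length + 1) := rfl
@[simp] lemma mergeCfg_true (V m ν t) :
    mergeCfg V m ν (true :: t) = ν t / V (t.length + 1) := rfl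

def synthE {Λ : Type} (V : ℕ → ℕ) (E : (List Bool → ℕ) → List Bool → Λ) (m : ℕ)
    (ν : List Bool → ℕ) (w' : List Bool) : Λ × Λ :=
  (E (mergeCfg V m ν) (false :: w'), E (mergeCfg V m ν) (true :: w'))

theorem abs_count : ∀ (g : ℕ) (Λ : Type) [DecidableEq Λ] (V : ℕ → ℕ),
    (∀ j, j < g → 0 < V j) →
    ∀ (E : (List Bool → ℕ) → List Bool → Λ),
    (∀ u v : List Bool, u ∈ leaves g → v ∈ leaves g → u ≠ v →
      ∀ x ∈ Family g V, ∀ y ∈ Family g V,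
        E x u = E y u → E x v = E y v → x (lcp u v) = y (lcp u v)) →
    (∏ j ∈ range g, (V j : ℝ)) ^ (2 ^ (g - 1)) ≤
      ∏ w ∈ leaves g, (((Family g V).image (fun x => E x w)).card : ℝ) := by
  intro g
  induction g with
  | zero =>
      intro Λ _ V hV E hDEC
      have h1 : (Family 0 V).Nonempty := family_nonempty 0 V (fun j hj => by omega)
      have h2 : 1 ≤ (((Family 0 V).image (fun x => E x ([] : List Bool))).card : ℝ) := by
        have := Finset.card_pos.2 (h1.image (fun x => E x ([] : List Bool)))
        exact_mod_cast this
      simpa [leaves] using h2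
  | succ k IH =>
      intro Λ _ V hV E hDEC
      classical
      set V2 : ℕ → ℕ := fun j => V (j + 1) * V (j + 1) with hV2def
      have hV2 : ∀ j, j < k → 0 < V2 j := by
        intro j hj
        have := hV (j + 1) (by omega)
        positivity
      have hXmem : ∀ m, m < V 0 → ∀ ν ∈ Family k V2, mergeCfg V m ν ∈ Family (k + 1) V := by
        intro m hm ν hν
        obtain ⟨Hb, Hz⟩ := (mem_family_iff k V2 ν).1 hν
        refine (mem_family_iff (k + 1) V _).2 ⟨?_, ?_⟩
        · intro s hs
          cases s with
          | nil => simpa using hm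
          | cons b t =>
            have ht : t.length < k := by simpa using hs
            have hpos : 0 < V (t.length + 1) := hV (t.length + 1) (by omega)
            have hbd : ν t < V (t.length + 1) * V (t.length + 1) := Hb t ht
            cases b
            · simpa using Nat.mod_lt (ν t) hpos
            · have : ν t / V (t.length + 1) < V (t.length + 1) :=
                (Nat.div_lt_iff_lt_mul hpos).2 hbd
              simpa using this
        · intro s hs
          cases s with
          | nil => simp at hs
          | cons b t =>
            have ht : k ≤ t.length := by simpa using hs
            have h0 : ν t = 0 := Hz t ht
            cases b
            · simp [h0]
            · simp [h0]
      -- synthetic decoding property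
      have hDEC' : ∀ m, m < V 0 →
          (∀ u v : List Bool, u ∈ leaves k → v ∈ leaves k → u ≠ v →
            ∀ x ∈ Family k V2, ∀ y ∈ Family k V2,
              synthE V E m x u = synthE V E m y u →
              synthE V E m x v = synthE V E m y v →
                x (lcp u v) = y (lcp u v)) := by
        intro m hm u' v' hu hv hne ν hν μ hμ h1 h2
        have hxm := hXmem m hm ν hν
        have hym := hXmem m hm μ hμ
        have h1a : E (mergeCfg V m ν) (false :: u') = E (mergeCfg V m μ) (false :: u') :=
          congrArg Prod.fst h1
        have h1b : E (mergeCfg V m ν) (true :: u') = E (mergeCfg V m μ) (true :: u') :=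
          congrArg Prod.snd h1
        have h2a : E (mergeCfg V m ν) (false :: v') = E (mergeCfg V m μ) (false :: v') :=
          congrArg Prod.fst h2
        have h2b : E (mergeCfg V m ν) (true :: v') = E (mergeCfg V m μ) (true :: v') :=
          congrArg Prod.snd h2
        have memf : ∀ (b : Bool) (w : List Bool), w ∈ leaves k → (b :: w) ∈ leaves (k+1) := by
          intro b w hw
          exact (mem_leaves (k+1) (b :: w)).2 (by simp [(mem_leaves k w).1 hw])
        have hnef : (false :: u') ≠ (false :: v') := by
          intro hc; exact hne (by simpa using hc)
        have hnet : (true :: u') ≠ (true :: v') := by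
          intro hc; exact hne (by simpa using hc)
        have key_f := hDEC (false :: u') (false :: v') (memf false u' hu) (memf false v' hv)
          hnef (mergeCfg V m ν) hxm (mergeCfg V m μ) hym h1a h2a
        have key_t := hDEC (true :: u') (true :: v') (memf true u' hu) (memf true v' hv)
          hnet (mergeCfg V m ν) hxm (mergeCfg V m μ) hym h1b h2b
        rw [lcp_cons_same] at key_f key_t
        have hmod : ν (lcp u' v') % V ((lcp u' v').length + 1)
            = μ (lcp u' v') % V ((lcp u' v').length + 1) := by simpa using key_f
        have hdiv : ν (lcp u' v') / V ((lcp u' v').length + 1)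
            = μ (lcp u' v') / V ((lcp u' v').length + 1) := by simpa using key_t
        calc ν (lcp u' v')
            = V ((lcp u' v').length + 1) * (ν (lcp u' v') / V ((lcp u' v').length + 1))
                + ν (lcp u' v') % V ((lcp u' v').length + 1) := (Nat.div_add_mod _ _).symm
          _ = V ((lcp u' v').length + 1) * (μ (lcp u' v') / V ((lcp u' v').length + 1))
                + μ (lcp u' v') % V ((lcp u' v').length + 1) := by rw [hdiv, hmod]
          _ = μ (lcp u' v') := Nat.div_add_mod _ _
      -- per-m application of the induction hypothesis
      have hIHm : ∀ m, m < V 0 →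
          (∏ j ∈ range k, (V2 j : ℝ)) ^ (2 ^ (k - 1)) ≤
            ∏ w' ∈ leaves k,
              ((((Family k V2).image (fun ν => synthE V E m ν w')).card : ℝ)) := by
        intro m hm
        exact IH (Λ × Λ) V2 hV2 (synthE V E m) (hDEC' m hm)
      -- disjointness and the sum bound
      have hsum : ∀ w' ∈ leaves k,
          (∑ m ∈ range (V 0), ((Family k V2).image (fun ν => synthE V E m ν w')).card)
            ≤ ((Family (k+1) V).image (fun x => E x (false :: w'))).card
              * ((Family (k+1) V).image (fun x => E x (true :: w'))).card := by
        intro w' hw'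
        have hdisj : ∀ m₁ ∈ range (V 0), ∀ m₂ ∈ range (V 0), m₁ ≠ m₂ →
            Disjoint ((Family k V2).image (fun ν => synthE V E m₁ ν w'))
              ((Family k V2).image (fun ν => synthE V E m₂ ν w')) := by
          intro m₁ hm₁ m₂ hm₂ hne12
          rw [Finset.disjoint_left]
          rintro p hp1 hp2
          simp only [Finset.mem_image] at hp1 hp2
          obtain ⟨ν, hν, hpe⟩ := hp1
          obtain ⟨μ, hμ, hpe'⟩ := hp2
          have hEq : synthE V E m₁ ν w' = synthE V E m₂ μ w' := by rw [hpe, hpe']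
          have h1a : E (mergeCfg V m₁ ν) (false :: w') = E (mergeCfg V m₂ μ) (false :: w') :=
            congrArg Prod.fst hEq
          have h1b : E (mergeCfg V m₁ ν) (true :: w') = E (mergeCfg V m₂ μ) (true :: w') :=
            congrArg Prod.snd hEq
          have memf : ∀ (b : Bool), (b :: w') ∈ leaves (k+1) :=
            fun b => (mem_leaves (k+1) (b :: w')).2 (by simp [(mem_leaves k w').1 hw'])
          have hneq : (false :: w') ≠ (true :: w') := by simp
          have key := hDEC (false :: w') (true :: w') (memf false) (memf true) hneq
            (mergeCfg V m₁ ν) (hXmem m₁ (by simpa using hm₁) ν hν)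
            (mergeCfg V m₂ μ) (hXmem m₂ (by simpa using hm₂) μ hμ) h1a h1b
          rw [lcp_cons_ne (by simp)] at key
          simp only [mergeCfg_nil] at key
          exact hne12 key
        rw [← Finset.card_biUnion hdisj]
        have hsub : ((range (V 0)).biUnion
              (fun m => (Family k V2).image (fun ν => synthE V E m ν w')))
            ⊆ (((Family (k+1) V).image (fun x => E x (false :: w'))) ×ˢ
               ((Family (k+1) V).image (fun x => E x (true :: w')))) := by
          intro p hp
          simp only [Finset.mem_biUnion, Finset.mem_image] at hp
          obtain ⟨m, hm, ν, hν, rfl⟩ := hp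
          rw [Finset.mem_product]
          exact ⟨Finset.mem_image.2 ⟨mergeCfg V m ν, hXmem m (by simpa using hm) ν hν, rfl⟩,
            Finset.mem_image.2 ⟨mergeCfg V m ν, hXmem m (by simpa using hm) ν hν, rfl⟩⟩
        calc ((range (V 0)).biUnion
              (fun m => (Family k V2).image (fun ν => synthE V E m ν w'))).card
            ≤ (((Family (k+1) V).image (fun x => E x (false :: w'))) ×ˢ
               ((Family (k+1) V).image (fun x => E x (true :: w')))).card :=
              Finset.card_le_card hsub
          _ = _ := by rw [Finset.card_product]
      -- the real-number chain
      set PREV : ℝ := ∏ j ∈ range k, (V (j + 1) : ℝ) with hPREV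
      have hPREV0 : 0 ≤ PREV := Finset.prod_nonneg (fun j _ => by positivity)
      have hV2cast : (∏ j ∈ range k, (V2 j : ℝ)) = PREV * PREV := by
        rw [hPREV, ← Finset.prod_mul_distrib]
        apply Finset.prod_congr rfl
        intro j _
        push_cast [hV2def]
        ring
      have hexp : ((PREV * PREV) ^ (2 ^ (k - 1))) = PREV ^ (2 ^ k) := by
        cases k with
        | zero => simp [hPREV]
        | succ s =>
            rw [Nat.succ_sub_one, show PREV * PREV = PREV ^ 2 by ring, ← pow_mul]
            congr 1
            rw [pow_succ]
            ring
      have hper_m : ∀ m ∈ range (V 0),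
          PREV ≤ sqrtIter k (∏ w' ∈ leaves k,
            (((Family k V2).image (fun ν => synthE V E m ν w')).card : ℝ)) := by
        intro m hm
        have h1 : PREV ^ (2 ^ k) ≤ ∏ w' ∈ leaves k,
            (((Family k V2).image (fun ν => synthE V E m ν w')).card : ℝ) := by
          calc PREV ^ (2^k) = (PREV * PREV) ^ (2 ^ (k-1)) := hexp.symm
            _ = (∏ j ∈ range k, (V2 j : ℝ)) ^ (2 ^ (k-1)) := by rw [hV2cast]
            _ ≤ _ := hIHm m (by simpa using hm)
        calc PREV = sqrtIter k (PREV ^ (2 ^ k)) := (sqrtIter_pow k hPREV0).symm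
          _ ≤ _ := sqrtIter_mono k h1
      have hhoeld := hoelder k (range (V 0))
        (fun w' m => (((Family k V2).image (fun ν => synthE V E m ν w')).card : ℝ))
        (fun w m => by positivity)
      have hchain : ((V 0 : ℝ) * PREV) ^ (2 ^ k) ≤
          ∏ w ∈ leaves (k+1), ((((Family (k+1) V).image (fun x => E x w)).card : ℝ)) := by
        calc ((V 0 : ℝ) * PREV) ^ (2 ^ k)
            = (∑ _m ∈ range (V 0), PREV) ^ (2 ^ k) := by
              rw [Finset.sum_const, Finset.card_range]
              simp [nsmul_eq_mul]
          _ ≤ (∑ m ∈ range (V 0), sqrtIter k (∏ w' ∈ leaves k,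
                (((Family k V2).image (fun ν => synthE V E m ν w')).card : ℝ))) ^ (2^k) := by
              apply pow_le_pow_left₀
              · exact Finset.sum_nonneg (fun m _ => hPREV0)
              · exact Finset.sum_le_sum hper_m
          _ ≤ ∏ w' ∈ leaves k, (∑ m ∈ range (V 0),
                (((Family k V2).image (fun ν => synthE V E m ν w')).card : ℝ)) := hhoeld
          _ ≤ ∏ w' ∈ leaves k,
                ((((Family (k+1) V).image (fun x => E x (false :: w'))).card : ℝ)
                  * (((Family (k+1) V).image (fun x => E x (true :: w'))).card : ℝ)) := by
              apply Finset.prod_le_prod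
              · intro w' _
                exact Finset.sum_nonneg (fun m _ => by positivity)
              · intro w' hw'
                have h := hsum w' hw'
                push_cast
                exact_mod_cast h
          _ = ∏ w ∈ leaves (k+1),
                ((((Family (k+1) V).image (fun x => E x w)).card : ℝ)) := by
              rw [prod_leaves_succ k
                (fun w => ((((Family (k+1) V).image (fun x => E x w)).card : ℝ)))]
      have hfin : (∏ j ∈ range (k+1), (V j : ℝ)) = (V 0 : ℝ) * PREV := by
        rw [Finset.prod_range_succ', hPREV]
        ring
      rw [Nat.succ_sub_one, hfin]
      exact hchain

end HWA

theorem hWa_label_length_lower_bound (h W a : ℕ) (hh : 1 ≤ h) (hW : 2 ≤ W)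
    (ha : 1 ≤ a) (hdvd : a ^ h ∣ W)
    (d : List Bool → List Bool → ℕ)
    (e : (List Bool → ℕ) → List Bool → List Bool)
    (he : ∀ x : List Bool → ℕ, IsConfig h W a x →
      ∀ u v : List Bool, u.length = h → v.length = h →
        d (e x u) (e x v) = leafDist h W a x u v) :
    ∃ x : List Bool → ℕ, IsConfig h W a x ∧
      ∃ u : List Bool, u.length = h ∧
        ((e x u).length : ℝ) ≥
          (h : ℝ) / 2 * Real.logb 2 W -
            (h : ℝ) * ((h : ℝ) - 1) / 4 * Real.logb 2 a - 1 := by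
  classical
  open HWA Finset in
  obtain ⟨h', rfl⟩ : ∃ h', h = h' + 1 := ⟨h - 1, by omega⟩
  set h := h' + 1 with hhdef
  set V : ℕ → ℕ := fun j => W / a ^ j with hVdef
  have ha0 : 0 < a := by omega
  have hW0 : 0 < W := by omega
  have hdvdj : ∀ j, j ≤ h → a ^ j ∣ W := fun j hj => dvd_trans (pow_dvd_pow a hj) hdvd
  have hVpos : ∀ j, j < h → 0 < V j := by
    intro j hj
    have h1 : a ^ j ∣ W := hdvdj j (by omega)
    have h2 : a ^ j ≤ W := Nat.le_of_dvd hW0 h1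
    exact Nat.div_pos h2 (by positivity)
  have famConf : ∀ x ∈ HWA.Family h V, IsConfig h W a x := by
    intro x hx
    intro s hs
    exact ((HWA.mem_family_iff h V x).1 hx).1 s hs
  have hDEC : ∀ u v : List Bool, u ∈ HWA.leaves h → v ∈ HWA.leaves h → u ≠ v →
      ∀ x ∈ HWA.Family h V, ∀ y ∈ HWA.Family h V,
        e x u = e y u → e x v = e y v → x (lcp u v) = y (lcp u v) := by
    intro u v hu hv hne x hx y hy hEu hEv
    have hxd := he x (famConf x hx) u v ((HWA.mem_leaves h u).1 hu) ((HWA.mem_leaves h v).1 hv)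
    have hyd := he y (famConf y hy) u v ((HWA.mem_leaves h u).1 hu) ((HWA.mem_leaves h v).1 hv)
    rw [hEu, hEv] at hxd
    have hdd : leafDist h W a x u v = leafDist h W a y u v := by rw [← hxd, hyd]
    unfold leafDist at hdd
    rw [if_neg hne, if_neg hne] at hdd
    omega
  have key := HWA.abs_count h (List Bool) V hVpos e hDEC
  -- maximal label length
  set P : Finset ((List Bool → ℕ) × List Bool) := (HWA.Family h V) ×ˢ (HWA.leaves h) with hPdef
  have hPne : P.Nonempty := by
    obtain ⟨x, hx⟩ := HWA.family_nonempty h V hVpos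
    obtain ⟨w, hw⟩ := HWA.leaves_nonempty h
    exact ⟨(x, w), Finset.mem_product.2 ⟨hx, hw⟩⟩
  set t : ℕ := P.sup (fun p => (e p.1 p.2).length) with htdef
  have hlen : ∀ x ∈ HWA.Family h V, ∀ w ∈ HWA.leaves h, (e x w).length ≤ t := by
    intro x hx w hw
    rw [htdef]
    exact Finset.le_sup (f := fun p : (List Bool → ℕ) × List Bool => (e p.1 p.2).length)
      (b := (x, w)) (Finset.mem_product.2 ⟨hx, hw⟩)
  -- bound each label count
  have hNle : ∀ w ∈ HWA.leaves h,
      (((HWA.Family h V).image (fun x => e x w)).card : ℝ) ≤ (2:ℝ) ^ (t + 1) := by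
    intro w hw
    have hnat : ((HWA.Family h V).image (fun x => e x w)).card ≤ 2 ^ (t + 1) := by
      have := Finset.card_le_card_of_injOn (f := HWA.enc)
        (s := (HWA.Family h V).image (fun x => e x w)) (t := Finset.range (2 ^ (t+1)))
        ?maps ?inj
      · simpa using this
      · intro l hl
        simp only [Finset.mem_coe, Finset.mem_image] at hl
        obtain ⟨x, hx, rfl⟩ := hl
        have h1 : (e x w).length ≤ t := hlen x hx w hw
        have h2 : HWA.enc (e x w) < 2 ^ ((e x w).length + 1) := HWA.enc_lt _
        have h3 : (2:ℕ) ^ ((e x w).length + 1) ≤ 2 ^ (t + 1) :=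
          Nat.pow_le_pow_right (by omega) (by omega)
        exact Finset.mem_range.2 (lt_of_lt_of_le h2 h3)
      · intro l1 _ l2 _ hl
        exact HWA.enc_inj l1 l2 hl
    calc (((HWA.Family h V).image (fun x => e x w)).card : ℝ)
        ≤ ((2 ^ (t+1) : ℕ) : ℝ) := by exact_mod_cast hnat
      _ = (2:ℝ) ^ (t+1) := by push_cast; ring
  -- the counting chain
  set X : ℝ := ∏ j ∈ range h, (V j : ℝ) with hXdef
  have hX1 : (1:ℝ) ≤ X := by
    rw [hXdef]
    have := Finset.prod_le_prod (s := range h) (f := fun _ => (1:ℝ))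
      (g := fun j => (V j : ℝ)) (fun _ _ => by norm_num)
      (fun j hj => by
        have := hVpos j (by simpa using hj)
        show (1:ℝ) ≤ (V j : ℝ)
        exact_mod_cast this)
    simpa using this
  have hbig : X ^ (2 ^ h') ≤ ((2:ℝ) ^ (t+1)) ^ (2 ^ h) := by
    have h1 : X ^ (2 ^ (h - 1)) ≤
        ∏ w ∈ HWA.leaves h, (((HWA.Family h V).image (fun x => e x w)).card : ℝ) := key
    have h2 : ∏ w ∈ HWA.leaves h, (((HWA.Family h V).image (fun x => e x w)).card : ℝ)
        ≤ ∏ w ∈ HWA.leaves h, ((2:ℝ) ^ (t+1)) := by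
      apply Finset.prod_le_prod
      · intro w _; positivity
      · exact hNle
    have h3 : ∏ w ∈ HWA.leaves h, ((2:ℝ) ^ (t+1)) = ((2:ℝ) ^ (t+1)) ^ (2 ^ h) := by
      rw [Finset.prod_const, HWA.card_leaves]
    have h4 : h - 1 = h' := by omega
    rw [h4] at h1
    calc X ^ (2 ^ h') ≤ _ := h1
      _ ≤ _ := h2
      _ = _ := h3
  -- take logs
  have hXpos : (0:ℝ) < X := lt_of_lt_of_le one_pos hX1
  have hlog1 : Real.logb 2 (X ^ (2 ^ h')) ≤ Real.logb 2 (((2:ℝ) ^ (t+1)) ^ (2 ^ h)) := by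
    apply Real.logb_le_logb_of_le (by norm_num)
    · positivity
    · exact hbig
  rw [Real.logb_pow, Real.logb_pow] at hlog1
  have hlogb2 : Real.logb 2 ((2:ℝ) ^ (t+1)) = (t+1 : ℝ) := by
    rw [Real.logb_pow, Real.logb_self_eq_one (by norm_num)]
    push_cast; ring
  rw [hlogb2] at hlog1
  have hpow2 : ((2 ^ h : ℕ) : ℝ) = ((2 ^ h' : ℕ) : ℝ) * 2 := by
    push_cast [hhdef, pow_succ]
    ring
  have hlogX : Real.logb 2 X ≤ 2 * (t + 1 : ℝ) := by
    have hA : (0:ℝ) < ((2 ^ h' : ℕ) : ℝ) := by positivity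
    have h5 : ((2 ^ h' : ℕ) : ℝ) * Real.logb 2 X
        ≤ ((2 ^ h' : ℕ) : ℝ) * (2 * (t + 1 : ℝ)) := by
      rw [hpow2] at hlog1
      linarith
    exact (mul_le_mul_iff_right₀ hA).1 h5
  -- compute logb of the product
  have hXsum : Real.logb 2 X =
      (h : ℝ) * Real.logb 2 W - ((h:ℝ) * ((h:ℝ) - 1) / 2) * Real.logb 2 a := by
    have hfactor : ∀ j ∈ range h, ((V j : ℝ)) ≠ 0 := by
      intro j hj
      have := hVpos j (by simpa using hj)
      positivity
    rw [hXdef, Real.logb_prod _ _ hfactor]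
    have hterm : ∀ j ∈ range h,
        Real.logb 2 ((V j : ℝ)) = Real.logb 2 W - (j:ℝ) * Real.logb 2 a := by
      intro j hj
      have hjh : j < h := by simpa using hj
      have hcast : ((V j : ℕ) : ℝ) = (W : ℝ) / ((a:ℝ) ^ j) := by
        rw [hVdef]
        rw [Nat.cast_div (hdvdj j (by omega))]
        · push_cast; ring
        · positivity
      rw [hcast, Real.logb_div (by positivity) (by positivity), Real.logb_pow]
    rw [Finset.sum_congr rfl hterm, Finset.sum_sub_distrib, Finset.sum_const, Finset.card_range]
    have hgauss : (∑ j ∈ range h, (j:ℝ)) = (h:ℝ) * ((h:ℝ) - 1) / 2 := by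
      have hnat := Finset.sum_range_id_mul_two h
      have : ((∑ j ∈ range h, j : ℕ) : ℝ) * 2 = (h:ℝ) * ((h:ℝ) - 1) := by
        rw [← Nat.cast_ofNat (n := 2), ← Nat.cast_mul, hnat]
        push_cast [Nat.cast_sub (show 1 ≤ h by omega)]
        ring
      push_cast at this ⊢
      linarith
    rw [← Finset.sum_mul, hgauss]
    push_cast
    ring
  -- extract the witness
  obtain ⟨p, hp, htp⟩ := Finset.exists_mem_eq_sup P hPne (fun p => (e p.1 p.2).length)
  have hp1 : p.1 ∈ HWA.Family h V := (Finset.mem_product.1 hp).1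
  have hp2 : p.2 ∈ HWA.leaves h := (Finset.mem_product.1 hp).2
  refine ⟨p.1, famConf p.1 hp1, p.2, (HWA.mem_leaves h p.2).1 hp2, ?_⟩
  have hlenp : ((e p.1 p.2).length : ℝ) = (t : ℝ) := by
    rw [htdef, htp]
  rw [hlenp]
  rw [hXsum] at hlogX
  linarith
end

section
/- For every real ε > 0 there exists a constant C > 0 such that for every integer n ≥ 2 there is a (1+ε)-stretch distance labeling scheme for trees on n vertices with all labels of length at most C·log₂ n. Precisely: there exists a decoder d : List Bool → List Bool → ℕ such that for every simple graph G : SimpleGraph (Fin n) with G.IsTree there exists an encoder e : Fin n → List Bool with (e u).length ≤ C·log₂ n for all u, and G.dist u v ≤ d (e u) (e v) and (d (e u) (e v) : ℝ) ≤ (1+ε)·(G.dist u v : ℝ) for all u, v. -/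
namespace ATD


def natBits : ℕ → List Bool
  | 0 => []
  | (n+1) => (((n+1) % 2) == 1) :: natBits ((n+1) / 2)
decreasing_by exact Nat.div_lt_self (Nat.succ_pos n) one_lt_two

lemma natBits_injective : ∀ a b : ℕ, natBits a = natBits b → a = b := by
  intro a
  induction a using Nat.strong_induction_on with
  | _ a ih =>
    intro b h
    match a, b with
    | 0, 0 => rfl
    | 0, (b+1) => rw [natBits, natBits] at h; exact absurd h (by simp)
    | (a+1), 0 => rw [natBits, natBits] at h; exact absurd h (by simp)
    | (a+1), (b+1) =>
      rw [natBits, natBits] at h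
      have h1 : (((a+1) % 2) == 1) = (((b+1) % 2) == 1) := (List.cons.injEq _ _ _ _ ▸ h).1
      have h2 : natBits ((a+1)/2) = natBits ((b+1)/2) := (List.cons.injEq _ _ _ _ ▸ h).2
      have hd : (a+1)/2 = (b+1)/2 :=
        ih ((a+1)/2) (Nat.div_lt_self (Nat.succ_pos a) one_lt_two) _ h2
      have hm : (a+1) % 2 = (b+1) % 2 := by
        rcases Nat.mod_two_eq_zero_or_one (a+1) with h' | h' <;>
          rcases Nat.mod_two_eq_zero_or_one (b+1) with h'' | h'' <;>
          simp [h', h''] at h1 ⊢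
      omega

lemma natBits_len : ∀ m : ℕ, 1 ≤ m → 2 ^ (natBits m).length ≤ 2 * m := by
  intro m
  induction m using Nat.strong_induction_on with
  | _ m ih =>
    intro hm
    match m, hm with
    | (n+1), _ =>
      rw [natBits]
      simp only [List.length_cons]
      rcases Nat.eq_zero_or_pos ((n+1)/2) with h0 | h0
      · have : n = 0 := by omega
        subst this
        simp [natBits]
      · have := ih ((n+1)/2) (Nat.div_lt_self (Nat.succ_pos n) one_lt_two) h0
        calc 2 ^ ((natBits ((n+1)/2)).length + 1)
            = 2 * 2 ^ (natBits ((n+1)/2)).length := by ring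
          _ ≤ 2 * (2 * ((n+1)/2)) := by omega
          _ ≤ 2 * (n+1) := by omega

def encN (x : ℕ) : List Bool :=
  List.replicate (natBits (x+1)).length true ++ (false :: natBits (x+1))

lemma repl_cancel : ∀ (m₁ m₂ : ℕ) (r₁ r₂ : List Bool),
    List.replicate m₁ true ++ (false :: r₁) = List.replicate m₂ true ++ (false :: r₂) →
    m₁ = m₂ ∧ r₁ = r₂ := by
  intro m₁
  induction m₁ with
  | zero =>
    intro m₂ r₁ r₂ h
    cases m₂ with
    | zero => simpa using h
    | succ m => simp [List.replicate_succ] at h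
  | succ m ih =>
    intro m₂ r₁ r₂ h
    cases m₂ with
    | zero => simp [List.replicate_succ] at h
    | succ m' =>
      simp only [List.replicate_succ, List.cons_append, List.cons.injEq, true_and] at h
      obtain ⟨h1, h2⟩ := ih m' r₁ r₂ h
      exact ⟨by omega, h2⟩

lemma encN_cancel {a b : ℕ} {s t : List Bool} (h : encN a ++ s = encN b ++ t) :
    a = b ∧ s = t := by
  unfold encN at h
  rw [List.append_assoc, List.append_assoc, List.cons_append, List.cons_append] at h
  obtain ⟨h1, h2⟩ := repl_cancel _ _ _ _ h
  have h3 : natBits (a+1) = natBits (b+1) ∧ s = t :=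
    List.append_inj h2 h1
  have := natBits_injective _ _ h3.1
  exact ⟨by omega, h3.2⟩

def encCat : List ℕ → List Bool
  | [] => []
  | x :: xs => encN x ++ encCat xs

lemma encCat_cancel : ∀ (l₁ l₂ : List ℕ) (s t : List Bool), l₁.length = l₂.length →
    encCat l₁ ++ s = encCat l₂ ++ t → l₁ = l₂ ∧ s = t := by
  intro l₁
  induction l₁ with
  | nil =>
    intro l₂ s t hl h
    cases l₂ with
    | nil => simpa [encCat] using h
    | cons b bs => simp at hl
  | cons a as ih =>
    intro l₂ s t hl h
    cases l₂ with
    | nil => simp at hl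
    | cons b bs =>
      simp only [encCat, List.append_assoc] at h
      obtain ⟨hab, h2⟩ := encN_cancel h
      obtain ⟨h3, h4⟩ := ih bs s t (by simpa using hl) h2
      exact ⟨by rw [hab, h3], h4⟩

def encL (l : List ℕ) : List Bool := encN l.length ++ encCat l

lemma encL_injective : Function.Injective encL := by
  intro l₁ l₂ h
  unfold encL at h
  obtain ⟨h1, h2⟩ := encN_cancel h
  have := encCat_cancel l₁ l₂ [] [] h1 (by simpa using h2)
  exact this.1

def lenN (x : ℕ) : ℕ := 2 * (natBits (x+1)).length + 1

lemma encN_length (x : ℕ) : (encN x).length = lenN x := by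
  simp [encN, lenN]; omega

lemma encL_length (l : List ℕ) :
    (encL l).length = lenN l.length + (l.map lenN).sum := by
  have : ∀ l' : List ℕ, (encCat l').length = (l'.map lenN).sum := by
    intro l'
    induction l' with
    | nil => simp [encCat]
    | cons a as ih => simp [encCat, ih, encN_length]
  simp [encL, encN_length, this]

lemma lenN_le_real (x : ℕ) : (lenN x : ℝ) ≤ 2 * Real.logb 2 (x+1) + 3 := by
  have h2 : (2:ℕ) ^ (natBits (x+1)).length ≤ 2 * (x+1) := natBits_len _ (by omega)
  have hlen : ((natBits (x+1)).length : ℝ) ≤ Real.logb 2 (x+1) + 1 := by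
    have hstep : ((natBits (x+1)).length : ℝ) ≤ Real.logb 2 (2 * ((x:ℝ)+1)) := by
      rw [Real.le_logb_iff_rpow_le (by norm_num : (1:ℝ) < 2) (by positivity)]
      rw [Real.rpow_natCast]
      exact_mod_cast h2
    have h2' : Real.logb 2 (2 * ((x:ℝ)+1)) = 1 + Real.logb 2 ((x:ℝ)+1) := by
      rw [Real.logb_mul (by norm_num) (by positivity)]
      rw [Real.logb_self_eq_one (by norm_num)]
    rw [h2'] at hstep
    linarith
  rw [lenN]
  push_cast
  linarith

section FM
variable (M : ℕ)

def fM : ℕ → ℕ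
  | 0 => 1
  | (τ+1) => fM τ + max 1 (fM τ / M)

lemma fM_lt (τ : ℕ) : fM M τ < fM M (τ+1) := by
  rw [fM]; omega

lemma fM_mono : Monotone (fM M) :=
  (strictMono_nat_of_lt_succ (fM_lt M)).monotone

lemma fM_ge (τ : ℕ) : τ + 1 ≤ fM M τ := by
  induction τ with
  | zero => simp [fM]
  | succ t ih => have := fM_lt M t; omega

lemma tIdx_ex (r : ℕ) : ∃ τ, r ≤ fM M τ := ⟨r, by have := fM_ge M r; omega⟩

def tIdx (r : ℕ) : ℕ := Nat.find (tIdx_ex M r)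

lemma tIdx_spec (r : ℕ) : r ≤ fM M (tIdx M r) := Nat.find_spec (tIdx_ex M r)

lemma tIdx_min' (r : ℕ) {τ : ℕ} (h : r ≤ fM M τ) : tIdx M r ≤ τ := Nat.find_min' _ h

lemma tIdx_not (r : ℕ) {τ : ℕ} (h : τ < tIdx M r) : ¬ r ≤ fM M τ :=
  Nat.find_min (tIdx_ex M r) (by rw [tIdx] at h; exact h)

lemma tIdx_mono {r r' : ℕ} (h : r ≤ r') : tIdx M r ≤ tIdx M r' :=
  tIdx_min' M r (le_trans h (tIdx_spec M r'))

lemma tIdx_approx (hM : 1 ≤ M) {r : ℕ} (hr : 1 ≤ r) :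
    M * fM M (tIdx M r) ≤ (M+1) * r := by
  rcases Nat.eq_zero_or_pos (tIdx M r) with h0 | h0
  · rw [h0]
    show M * fM M 0 ≤ (M+1) * r
    simp only [fM]
    calc M * 1 = M := by ring
      _ ≤ (M+1) * 1 := by omega
      _ ≤ (M+1) * r := Nat.mul_le_mul_left _ hr
  · obtain ⟨t, ht⟩ : ∃ t, tIdx M r = t + 1 := ⟨tIdx M r - 1, by omega⟩
    have hmin : ¬ r ≤ fM M t := tIdx_not M r (by omega)
    rw [ht]
    show M * (fM M t + max 1 (fM M t / M)) ≤ (M+1) * r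
    set a := fM M t with ha
    have har : a + 1 ≤ r := by omega
    rcases Nat.eq_zero_or_pos (a / M) with hq | hq
    · rw [hq]
      simp only [Nat.max_eq_left (by omega : (0:ℕ) ≤ 1)]
      calc M * (a + max 1 0) = M * (a + 1) := by norm_num
        _ ≤ M * r := Nat.mul_le_mul_left _ har
        _ ≤ (M+1) * r := Nat.mul_le_mul_right _ (by omega)
    · rw [Nat.max_eq_right hq]
      have hdm : M * (a / M) ≤ a := Nat.mul_div_le a M
      calc M * (a + a / M) = M * a + M * (a / M) := by ring
        _ ≤ M * a + a := Nat.add_le_add_left hdm _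
        _ = (M+1) * a := by ring
        _ ≤ (M+1) * r := Nat.mul_le_mul_left _ (by omega)

lemma fM_incr_ge (τ j : ℕ) : fM M τ + j * max 1 (fM M τ / M) ≤ fM M (τ + j) := by
  induction j with
  | zero => simp
  | succ j ih =>
    have hmono : fM M τ ≤ fM M (τ + j) := fM_mono M (by omega)
    have hdiv : fM M τ / M ≤ fM M (τ + j) / M := Nat.div_le_div_right hmono
    have hmx : max 1 (fM M τ / M) ≤ max 1 (fM M (τ + j) / M) := max_le_max le_rfl hdiv
    have hstep : fM M (τ + j + 1) = fM M (τ + j) + max 1 (fM M (τ + j) / M) := by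
      rw [fM]
    calc fM M τ + (j+1) * max 1 (fM M τ / M)
        = (fM M τ + j * max 1 (fM M τ / M)) + max 1 (fM M τ / M) := by ring
      _ ≤ fM M (τ + j) + max 1 (fM M τ / M) := Nat.add_le_add_right ih _
      _ ≤ fM M (τ + j) + max 1 (fM M (τ + j) / M) := Nat.add_le_add_left hmx _
      _ = fM M (τ + j + 1) := hstep.symm

lemma fM_double (hM : 1 ≤ M) (τ : ℕ) : 2 * fM M τ ≤ fM M (τ + 4 * M) := by
  have h := fM_incr_ge M τ (4 * M)
  set a := fM M τ with ha
  set q := max 1 (a / M) with hq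
  have key : a ≤ 4 * M * q := by
    rcases le_or_gt a (4 * M) with hc | hc
    · calc a ≤ 4 * M := hc
        _ = 4 * M * 1 := (mul_one _).symm
        _ ≤ 4 * M * q := Nat.mul_le_mul_left _ (le_max_left _ _)
    · have h1 : 1 ≤ a / M := (Nat.one_le_div_iff (by omega)).mpr (by omega)
      have hqa : q = a / M := by rw [hq]; omega
      have hmod := Nat.div_add_mod a M
      have hme : a % M < M := Nat.mod_lt _ (by omega)
      have h4 : 4 * M * q = 4 * (M * (a / M)) := by rw [hqa]; ring
      rw [h4]
      have hX : M * (a / M) + a % M = a := hmod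
      omega
  calc 2 * a = a + a := by ring
    _ ≤ a + 4 * M * q := Nat.add_le_add_left key _
    _ ≤ fM M (τ + 4 * M) := h

lemma fM_pow (hM : 1 ≤ M) (j : ℕ) : 2 ^ j ≤ fM M (4 * M * j) := by
  induction j with
  | zero => simp [fM]
  | succ j ih =>
    have h3 := fM_double M hM (4 * M * j)
    have h4 : 4 * M * j + 4 * M = 4 * M * (j + 1) := by ring
    calc 2 ^ (j+1) = 2 * 2 ^ j := by ring
      _ ≤ 2 * fM M (4 * M * j) := Nat.mul_le_mul_left _ ih
      _ ≤ fM M (4 * M * j + 4 * M) := h3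
      _ = fM M (4 * M * (j+1)) := by rw [h4]

lemma tIdx_le (hM : 1 ≤ M) {r : ℕ} (hr : 1 ≤ r) :
    tIdx M r ≤ 4 * M * (Nat.log 2 r + 1) := by
  apply tIdx_min'
  have h1 : r < 2 ^ (Nat.log 2 r + 1) := Nat.lt_pow_succ_log_self (by norm_num) r
  have h2 := fM_pow M hM (Nat.log 2 r + 1)
  omega

end FM


attribute [local instance 10] Classical.propDecidable

structure RTree (n : ℕ) where
  parent : Fin n → Fin n
  root : Fin n
  D : Fin n → ℕ
  hroot : parent root = root
  hDroot : D root = 0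
  hD : ∀ u, u ≠ root → D (parent u) + 1 = D u

namespace RTree

variable {n : ℕ} (T : RTree n)

lemma D_eq_zero_iff {u : Fin n} : T.D u = 0 ↔ u = root T := by
  constructor
  · intro h
    by_contra hne
    have := T.hD u hne
    omega
  · intro h; rw [h, T.hDroot]

lemma parent_root_iter (k : ℕ) : T.parent^[k] T.root = T.root := by
  induction k with
  | zero => rfl
  | succ k ih => rw [Function.iterate_succ_apply', ih, T.hroot]

lemma iter_depth : ∀ (k : ℕ) (u : Fin n), k ≤ T.D u → T.D (T.parent^[k] u) = T.D u - k := by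
  intro k
  induction k with
  | zero => intro u _; simp
  | succ k ih =>
    intro u hk
    rw [Function.iterate_succ_apply']
    have h1 : T.D (T.parent^[k] u) = T.D u - k := ih u (by omega)
    have hne : T.parent^[k] u ≠ T.root := by
      intro h
      rw [h, T.hDroot] at h1
      omega
    have := T.hD _ hne
    omega

lemma iter_root (u : Fin n) : T.parent^[T.D u] u = T.root := by
  have := T.iter_depth (T.D u) u le_rfl
  simp at this
  exact (T.D_eq_zero_iff).mp this

lemma iter_ge {k : ℕ} {u : Fin n} (h : T.D u ≤ k) : T.parent^[k] u = T.root := by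
  obtain ⟨j, hj⟩ : ∃ j, k = j + T.D u := ⟨k - T.D u, by omega⟩
  rw [hj, Function.iterate_add_apply, T.iter_root, T.parent_root_iter]

def anc (a b : Fin n) : Prop := ∃ k, T.parent^[k] b = a

lemma anc_refl (a : Fin n) : T.anc a a := ⟨0, rfl⟩

lemma anc_trans {a b c : Fin n} (h1 : T.anc a b) (h2 : T.anc b c) : T.anc a c := by
  obtain ⟨k1, hk1⟩ := h1
  obtain ⟨k2, hk2⟩ := h2
  exact ⟨k1 + k2, by rw [Function.iterate_add_apply, hk2, hk1]⟩

lemma anc_root (b : Fin n) : T.anc T.root b := ⟨T.D b, T.iter_root b⟩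

lemma anc_depth_le {a b : Fin n} (h : T.anc a b) : T.D a ≤ T.D b := by
  obtain ⟨k, hk⟩ := h
  rcases le_or_gt k (T.D b) with h' | h'
  · have := T.iter_depth k b h'
    rw [hk] at this
    omega
  · have := T.iter_ge (le_of_lt h') (u := b)
    rw [hk] at this
    rw [this, T.hDroot]
    omega

lemma anc_witness {a b : Fin n} (h : T.anc a b) : T.parent^[T.D b - T.D a] b = a := by
  obtain ⟨k, hk⟩ := h
  rcases le_or_gt k (T.D b) with h' | h'
  · have hd := T.iter_depth k b h'
    rw [hk] at hd
    have : k = T.D b - T.D a := by omega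
    rw [← this, hk]
  · have heq := T.iter_ge (le_of_lt h') (u := b)
    rw [hk] at heq
    subst heq
    rw [T.hDroot]
    simp
    exact T.iter_root b

/-- ancestor of `b` at depth `j` (for `j ≤ D b`). -/
def aDepth (j : ℕ) (b : Fin n) : Fin n := T.parent^[T.D b - j] b

lemma aDepth_depth {j : ℕ} {b : Fin n} (h : j ≤ T.D b) : T.D (T.aDepth j b) = j := by
  rw [aDepth]
  have := T.iter_depth (T.D b - j) b (by omega)
  omega

lemma aDepth_anc (j : ℕ) (b : Fin n) : T.anc (T.aDepth j b) b := ⟨_, rfl⟩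

lemma aDepth_self (b : Fin n) : T.aDepth (T.D b) b = b := by
  rw [aDepth]
  simp

lemma anc_aDepth {a b : Fin n} (h : T.anc a b) : T.aDepth (T.D a) b = a := by
  rw [aDepth]
  exact T.anc_witness h

lemma anc_eq_of_depth {a b : Fin n} (h : T.anc a b) (hd : T.D a = T.D b) : a = b := by
  have := T.anc_aDepth h
  rw [hd, T.aDepth_self] at this
  exact this.symm

lemma anc_antisymm {a b : Fin n} (h1 : T.anc a b) (h2 : T.anc b a) : a = b :=
  T.anc_eq_of_depth h1 (le_antisymm (T.anc_depth_le h1) (T.anc_depth_le h2))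

lemma anc_total {a b c : Fin n} (h1 : T.anc a c) (h2 : T.anc b c) (hd : T.D a ≤ T.D b) :
    T.anc a b := by
  have ha := T.anc_witness h1
  have hb := T.anc_witness h2
  have hbc := T.anc_depth_le h2
  refine ⟨T.D b - T.D a, ?_⟩
  calc T.parent^[T.D b - T.D a] b
      = T.parent^[T.D b - T.D a] (T.parent^[T.D c - T.D b] c) := by rw [hb]
    _ = T.parent^[(T.D b - T.D a) + (T.D c - T.D b)] c :=
        (Function.iterate_add_apply _ _ _ _).symm
    _ = T.parent^[T.D c - T.D a] c := by congr 1; omega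
    _ = a := ha

lemma anc_comparable {a b c : Fin n} (h1 : T.anc a c) (h2 : T.anc b c) :
    T.anc a b ∨ T.anc b a := by
  rcases le_total (T.D a) (T.D b) with h | h
  · exact Or.inl (T.anc_total h1 h2 h)
  · exact Or.inr (T.anc_total h2 h1 h)

lemma parent_anc {a b : Fin n} (h : T.anc a b) (hne : a ≠ b) : T.anc a (T.parent b) := by
  obtain ⟨k, hk⟩ := h
  cases k with
  | zero => exact absurd hk.symm hne
  | succ k => exact ⟨k, by rw [← hk, Function.iterate_succ_apply]⟩

lemma anc_parent {a b : Fin n} (h : T.anc a (T.parent b)) : T.anc a b := by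
  obtain ⟨k, hk⟩ := h
  exact ⟨k + 1, by rw [Function.iterate_succ_apply]; exact hk⟩

lemma anc_parent_self (b : Fin n) : T.anc (T.parent b) b := ⟨1, rfl⟩

lemma parent_aDepth {j : ℕ} {b : Fin n} (h : j + 1 ≤ T.D b) :
    T.parent (T.aDepth (j+1) b) = T.aDepth j b := by
  rw [aDepth, aDepth]
  have heq : T.D b - j = (T.D b - (j + 1)) + 1 := by omega
  rw [heq, Function.iterate_succ_apply']

lemma aDepth_parent {j : ℕ} {b : Fin n} (h : j ≤ T.D b - 1) :
    T.aDepth j b = T.aDepth j (T.parent b) := by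
  rcases eq_or_ne b T.root with hb | hb
  · subst hb; rw [T.hroot]
  · have hd := T.hD b hb
    rw [aDepth, aDepth]
    have : T.D b - j = (T.D (T.parent b) - j) + 1 := by omega
    rw [this, Function.iterate_succ_apply]

lemma anc_aDepth_agree {z u : Fin n} (h : T.anc z u) {j : ℕ} (hj : j ≤ T.D z) :
    T.aDepth j u = T.aDepth j z := by
  have hw := T.anc_witness h
  have hle := T.anc_depth_le h
  rw [aDepth, aDepth]
  have : T.D u - j = (T.D z - j) + (T.D u - T.D z) := by omega
  rw [this, Function.iterate_add_apply, hw]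

lemma lca_ex (u v : Fin n) : ∃ k, T.anc (T.parent^[k] u) v :=
  ⟨T.D u, by rw [T.iter_root]; exact T.anc_root v⟩

noncomputable def lca (u v : Fin n) : Fin n := T.parent^[Nat.find (T.lca_ex u v)] u

lemma lca_anc_left (u v : Fin n) : T.anc (T.lca u v) u := ⟨_, rfl⟩

lemma lca_anc_right (u v : Fin n) : T.anc (T.lca u v) v := Nat.find_spec (T.lca_ex u v)

lemma lca_max {u v w : Fin n} (h1 : T.anc w u) (h2 : T.anc w v) : T.anc w (T.lca u v) := by
  set k0 := Nat.find (T.lca_ex u v) with hk0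
  have hw := T.anc_witness h1
  set k := T.D u - T.D w with hk
  have hge : k0 ≤ k := by
    by_contra hlt
    have := Nat.find_min (T.lca_ex u v) (show k < k0 by omega)
    rw [hw] at this
    exact this h2
  refine ⟨k - k0, ?_⟩
  show T.parent^[k - k0] (T.parent^[k0] u) = w
  rw [← Function.iterate_add_apply]
  have : k - k0 + k0 = k := by omega
  rw [this, hw]

lemma lca_eq_of {u v w : Fin n} (h1 : T.anc w u) (h2 : T.anc w v)
    (h3 : ∀ w', T.anc w' u → T.anc w' v → T.anc w' w) : T.lca u v = w :=
  T.anc_antisymm (h3 _ (T.lca_anc_left u v) (T.lca_anc_right u v)) (T.lca_max h1 h2)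

lemma lca_self (u : Fin n) : T.lca u u = u :=
  T.lca_eq_of (T.anc_refl u) (T.anc_refl u) (fun _ h _ => h)

lemma lca_of_anc_right {u v : Fin n} (h : T.anc u v) : T.lca u v = u :=
  T.lca_eq_of (T.anc_refl u) h (fun _ h' _ => h')

lemma lca_of_anc_left {u v : Fin n} (h : T.anc v u) : T.lca u v = v :=
  T.lca_eq_of h (T.anc_refl v) (fun _ _ h' => h')

lemma lca_comm (u v : Fin n) : T.lca u v = T.lca v u :=
  T.lca_eq_of (T.lca_anc_right v u) (T.lca_anc_left v u)
    (fun _ h1 h2 => T.lca_max h2 h1)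

lemma lca_parent {u x : Fin n} (h : ¬ T.anc x u) : T.lca u x = T.lca u (T.parent x) := by
  have hne : T.lca u x ≠ x := by
    intro heq
    exact h (heq ▸ T.lca_anc_left u x)
  refine (T.lca_eq_of (T.lca_anc_left u x)
    (T.parent_anc (T.lca_anc_right u x) hne) ?_).symm
  intro w' h1 h2
  exact T.lca_max h1 (T.anc_parent h2)

lemma lca_depth_le_left (u v : Fin n) : T.D (T.lca u v) ≤ T.D u :=
  T.anc_depth_le (T.lca_anc_left u v)

lemma lca_depth_le_right (u v : Fin n) : T.D (T.lca u v) ≤ T.D v :=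
  T.anc_depth_le (T.lca_anc_right u v)

/-- abstract tree distance -/
noncomputable def tdist (u v : Fin n) : ℤ :=
  (T.D u : ℤ) + (T.D v : ℤ) - 2 * (T.D (T.lca u v) : ℤ)

lemma D_lt (u : Fin n) : T.D u < n := by
  classical
  have hinj : Set.InjOn (fun j => T.aDepth j u) (Finset.range (T.D u + 1)) := by
    intro i hi j hj hij
    simp only [Finset.coe_range, Set.mem_Iio] at hi hj
    have hij' : T.aDepth i u = T.aDepth j u := hij
    have h1 := T.aDepth_depth (j := i) (b := u) (by omega)
    have h2 := T.aDepth_depth (j := j) (b := u) (by omega)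
    rw [hij'] at h1
    omega
  have h2 := Finset.card_le_univ ((Finset.range (T.D u + 1)).image (fun j => T.aDepth j u))
  rw [Finset.card_image_of_injOn hinj] at h2
  simp only [Finset.card_range, Finset.card_univ, Fintype.card_fin] at h2
  omega

section HeavyLight

noncomputable def sub (w : Fin n) : Finset (Fin n) := Finset.univ.filter (fun x => T.anc w x)

noncomputable def size (w : Fin n) : ℕ := (T.sub w).card

lemma mem_sub {w x : Fin n} : x ∈ T.sub w ↔ T.anc w x := by
  simp [sub]

lemma size_pos (w : Fin n) : 1 ≤ T.size w :=
  Finset.card_pos.mpr ⟨w, T.mem_sub.mpr (T.anc_refl w)⟩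

lemma size_le (w : Fin n) : T.size w ≤ n := by
  have := Finset.card_le_univ (T.sub w)
  simpa [size] using this

lemma sub_mono {a b : Fin n} (h : T.anc a b) : T.sub b ⊆ T.sub a := by
  intro x hx
  exact T.mem_sub.mpr (T.anc_trans h (T.mem_sub.mp hx))

lemma size_mono {a b : Fin n} (h : T.anc a b) : T.size b ≤ T.size a :=
  Finset.card_le_card (T.sub_mono h)

lemma sub_disjoint {a b : Fin n} (h1 : ¬ T.anc a b) (h2 : ¬ T.anc b a) :
    Disjoint (T.sub a) (T.sub b) := by
  rw [Finset.disjoint_left]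
  intro x hxa hxb
  rcases T.anc_comparable (T.mem_sub.mp hxa) (T.mem_sub.mp hxb) with h | h
  · exact h1 h
  · exact h2 h

noncomputable def children (w : Fin n) : Finset (Fin n) :=
  Finset.univ.filter (fun c => T.parent c = w ∧ c ≠ w)

lemma mem_children {w c : Fin n} : c ∈ T.children w ↔ T.parent c = w ∧ c ≠ w := by
  simp [children]

lemma ne_parent {c : Fin n} (h : c ≠ T.root) : c ≠ T.parent c := by
  intro heq
  have := T.hD c h
  rw [← heq] at this
  omega

lemma mem_children_parent {c : Fin n} (h : c ≠ T.root) : c ∈ T.children (T.parent c) :=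
  T.mem_children.mpr ⟨rfl, T.ne_parent h⟩

lemma children_ne_root {w c : Fin n} (h : c ∈ T.children w) : c ≠ T.root := by
  rcases T.mem_children.mp h with ⟨h1, h2⟩
  intro heq
  rw [heq] at h1 h2
  rw [T.hroot] at h1
  exact h2 h1

lemma children_depth {w c : Fin n} (h : c ∈ T.children w) : T.D c = T.D w + 1 := by
  have hne := T.children_ne_root h
  have := T.hD c hne
  rw [(T.mem_children.mp h).1] at this
  omega

lemma children_incomp {w c1 c2 : Fin n} (h1 : c1 ∈ T.children w) (h2 : c2 ∈ T.children w)
    (hne : c1 ≠ c2) : ¬ T.anc c1 c2 := by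
  intro h
  have hd1 := T.children_depth h1
  have hd2 := T.children_depth h2
  exact hne (T.anc_eq_of_depth h (by omega))

noncomputable def hC (w : Fin n) : Fin n :=
  if h : (T.children w).Nonempty then
    (Finset.exists_max_image (T.children w) T.size h).choose
  else w

lemma hC_mem {w : Fin n} (h : (T.children w).Nonempty) : T.hC w ∈ T.children w := by
  rw [hC, dif_pos h]
  exact (Finset.exists_max_image (T.children w) T.size h).choose_spec.1

lemma hC_max {w c : Fin n} (hc : c ∈ T.children w) : T.size c ≤ T.size (T.hC w) := by
  have h : (T.children w).Nonempty := ⟨c, hc⟩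
  rw [hC, dif_pos h]
  exact (Finset.exists_max_image (T.children w) T.size h).choose_spec.2 c hc

def light (x : Fin n) : Prop := x ≠ T.root ∧ x ≠ T.hC (T.parent x)

lemma light_ne_root {x : Fin n} (h : T.light x) : x ≠ T.root := h.1

lemma heavy_eq_hC {x : Fin n} (h1 : ¬ T.light x) (h2 : x ≠ T.root) :
    x = T.hC (T.parent x) := by
  rw [light] at h1
  tauto

lemma light_halving {c : Fin n} (hl : T.light c) : 2 * T.size c ≤ T.size (T.parent c) := by
  have hcm := T.mem_children_parent hl.1
  have hhm := T.hC_mem (w := T.parent c) ⟨c, hcm⟩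
  have hne : c ≠ T.hC (T.parent c) := hl.2
  have hsz := T.hC_max hcm
  have hdisj : Disjoint (T.sub c) (T.sub (T.hC (T.parent c))) :=
    T.sub_disjoint (T.children_incomp hcm hhm hne) (T.children_incomp hhm hcm (Ne.symm hne))
  have hsub : T.sub c ∪ T.sub (T.hC (T.parent c)) ⊆ T.sub (T.parent c) := by
    apply Finset.union_subset
    · exact T.sub_mono ⟨1, rfl⟩
    · exact T.sub_mono ⟨1, by rw [Function.iterate_one, (T.mem_children.mp hhm).1]⟩
  have hcard := Finset.card_le_card hsub
  rw [Finset.card_union_of_disjoint hdisj] at hcard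
  have : T.size c + T.size c ≤ T.size c + T.size (T.hC (T.parent c)) := by omega
  calc 2 * T.size c = T.size c + T.size c := by ring
    _ ≤ T.size c + T.size (T.hC (T.parent c)) := this
    _ ≤ T.size (T.parent c) := hcard

noncomputable def top (x : Fin n) : Fin n :=
  if x = T.root ∨ T.light x then x else top (T.parent x)
termination_by T.D x
decreasing_by
  have hne : x ≠ T.root := by tauto
  have := T.hD x hne
  omega

lemma top_eq_self {x : Fin n} (h : x = T.root ∨ T.light x) : T.top x = x := by
  rw [top, if_pos h]

lemma top_eq_parent {x : Fin n} (h : ¬ (x = T.root ∨ T.light x)) :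
    T.top x = T.top (T.parent x) := by
  conv_lhs => rw [top]
  rw [if_neg h]

lemma top_anc (x : Fin n) : T.anc (T.top x) x := by
  suffices H : ∀ d x, T.D x ≤ d → T.anc (T.top x) x from H (T.D x) x le_rfl
  intro d
  induction d with
  | zero =>
    intro x hx
    have hroot : x = T.root := T.D_eq_zero_iff.mp (by omega)
    rw [T.top_eq_self (Or.inl hroot)]
    exact T.anc_refl x
  | succ d ih =>
    intro x hx
    by_cases h : x = T.root ∨ T.light x
    · rw [T.top_eq_self h]; exact T.anc_refl x
    · rw [T.top_eq_parent h]
      have hne : x ≠ T.root := by tauto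
      have hd := T.hD x hne
      exact T.anc_parent (ih (T.parent x) (by omega))

lemma top_cond (x : Fin n) : T.top x = T.root ∨ T.light (T.top x) := by
  suffices H : ∀ d x, T.D x ≤ d → (T.top x = T.root ∨ T.light (T.top x)) from H (T.D x) x le_rfl
  intro d
  induction d with
  | zero =>
    intro x hx
    have hroot : x = T.root := T.D_eq_zero_iff.mp (by omega)
    rw [T.top_eq_self (Or.inl hroot), hroot]
    exact Or.inl rfl
  | succ d ih =>
    intro x hx
    by_cases h : x = T.root ∨ T.light x
    · rw [T.top_eq_self h]
      rcases h with h | h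
      · exact Or.inl h
      · exact Or.inr h
    · rw [T.top_eq_parent h]
      have hne : x ≠ T.root := by tauto
      have hd := T.hD x hne
      exact ih (T.parent x) (by omega)

lemma chain_no_light (x : Fin n) :
    ∀ j, T.D (T.top x) < j → j ≤ T.D x → ¬ T.light (T.aDepth j x) := by
  suffices H : ∀ d x, T.D x ≤ d → ∀ j, T.D (T.top x) < j → j ≤ T.D x →
      ¬ T.light (T.aDepth j x) from H (T.D x) x le_rfl
  intro d
  induction d with
  | zero =>
    intro x hx j h1 h2
    omega
  | succ d ih =>
    intro x hx j h1 h2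
    by_cases h : x = T.root ∨ T.light x
    · rw [T.top_eq_self h] at h1
      omega
    · have hne : x ≠ T.root := by tauto
      have hd := T.hD x hne
      rcases eq_or_lt_of_le h2 with hj | hj
      · subst hj
        rw [T.aDepth_self]
        tauto
      · rw [T.aDepth_parent (by omega)]
        rw [T.top_eq_parent h] at h1
        exact ih (T.parent x) (by omega) j h1 (by omega)

lemma chain_step {x : Fin n} {j : ℕ} (h1 : T.D (T.top x) < j + 1) (h2 : j + 1 ≤ T.D x) :
    T.aDepth (j+1) x = T.hC (T.aDepth j x) := by
  set c := T.aDepth (j+1) x with hc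
  have hlight : ¬ T.light c := T.chain_no_light x (j+1) h1 h2
  have hcd : T.D c = j + 1 := T.aDepth_depth h2
  have hcr : c ≠ T.root := by
    intro heq
    rw [heq, T.hDroot] at hcd
    omega
  have := T.heavy_eq_hC hlight hcr
  rw [this, T.parent_aDepth h2]

lemma chains_coincide {u v t : Fin n} (htu : T.top u = t) (htv : T.top v = t) :
    ∀ j, T.D t ≤ j → j ≤ T.D u → j ≤ T.D v → T.aDepth j u = T.aDepth j v := by
  intro j hj
  induction j, hj using Nat.le_induction with
  | base =>
    intro _ _
    have h1 : T.aDepth (T.D t) u = t := T.anc_aDepth (htu ▸ T.top_anc u)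
    have h2 : T.aDepth (T.D t) v = t := T.anc_aDepth (htv ▸ T.top_anc v)
    rw [h1, h2]
  | succ j hj ih =>
    intro h2 h3
    have hu : T.aDepth (j+1) u = T.hC (T.aDepth j u) :=
      T.chain_step (by rw [htu]; omega) h2
    have hv : T.aDepth (j+1) v = T.hC (T.aDepth j v) :=
      T.chain_step (by rw [htv]; omega) h3
    rw [hu, hv, ih (by omega) (by omega)]

lemma comparable_of_top {u v t : Fin n} (htu : T.top u = t) (htv : T.top v = t) :
    T.anc u v ∨ T.anc v u := by
  have hdtu : T.D t ≤ T.D u := T.anc_depth_le (htu ▸ T.top_anc u)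
  have hdtv : T.D t ≤ T.D v := T.anc_depth_le (htv ▸ T.top_anc v)
  rcases le_total (T.D u) (T.D v) with h | h
  · left
    have := T.chains_coincide htu htv (T.D u) hdtu le_rfl h
    rw [T.aDepth_self] at this
    rw [this]
    exact T.aDepth_anc _ _
  · right
    have := T.chains_coincide htu htv (T.D v) hdtv h le_rfl
    rw [T.aDepth_self] at this
    rw [← this]
    exact T.aDepth_anc _ _

noncomputable def sig (x : Fin n) : List (Fin n) :=
  if x = T.root then []
  else if T.light x then sig (T.parent x) ++ [x]
  else sig (T.parent x)
termination_by T.D x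
decreasing_by
  all_goals (have := T.hD x (by assumption); omega)

lemma sig_root : T.sig T.root = [] := by rw [sig]; simp

lemma sig_light {x : Fin n} (h : T.light x) : T.sig x = T.sig (T.parent x) ++ [x] := by
  rw [sig, if_neg h.1, if_pos h]

lemma sig_heavy {x : Fin n} (h1 : x ≠ T.root) (h2 : ¬ T.light x) :
    T.sig x = T.sig (T.parent x) := by
  conv_lhs => rw [sig]
  rw [if_neg h1, if_neg h2]

lemma mem_sig {x c : Fin n} (h : c ∈ T.sig x) : T.light c ∧ T.anc c x := by
  suffices H : ∀ d x, T.D x ≤ d → ∀ c, c ∈ T.sig x → T.light c ∧ T.anc c x from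
    H (T.D x) x le_rfl c h
  intro d
  induction d with
  | zero =>
    intro x hx c hc
    have hroot : x = T.root := T.D_eq_zero_iff.mp (by omega)
    rw [hroot, T.sig_root] at hc
    simp at hc
  | succ d ih =>
    intro x hx c hc
    by_cases hr : x = T.root
    · rw [hr, T.sig_root] at hc; simp at hc
    · have hd := T.hD x hr
      by_cases hl : T.light x
      · rw [T.sig_light hl] at hc
        rcases List.mem_append.mp hc with hc | hc
        · have := ih (T.parent x) (by omega) c hc
          exact ⟨this.1, T.anc_parent this.2⟩
        · have hcx : c = x := by simpa using hc
          subst hcx; exact ⟨hl, T.anc_refl c⟩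
      · rw [T.sig_heavy hr hl] at hc
        have := ih (T.parent x) (by omega) c hc
        exact ⟨this.1, T.anc_parent this.2⟩

lemma top_sig (x : Fin n) :
    (T.sig x = [] ∧ T.top x = T.root) ∨ (∃ l c, T.sig x = l ++ [c] ∧ T.top x = c) := by
  suffices H : ∀ d x, T.D x ≤ d →
      (T.sig x = [] ∧ T.top x = T.root) ∨ (∃ l c, T.sig x = l ++ [c] ∧ T.top x = c) from
    H (T.D x) x le_rfl
  intro d
  induction d with
  | zero =>
    intro x hx
    have hroot : x = T.root := T.D_eq_zero_iff.mp (by omega)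
    subst hroot
    exact Or.inl ⟨T.sig_root, T.top_eq_self (Or.inl rfl)⟩
  | succ d ih =>
    intro x hx
    by_cases hr : x = T.root
    · subst hr
      exact Or.inl ⟨T.sig_root, T.top_eq_self (Or.inl rfl)⟩
    · have hd := T.hD x hr
      by_cases hl : T.light x
      · exact Or.inr ⟨T.sig (T.parent x), x, T.sig_light hl, T.top_eq_self (Or.inr hl)⟩
      · rw [T.sig_heavy hr hl, T.top_eq_parent (by tauto)]
        exact ih (T.parent x) (by omega)

lemma sig_parent_chain {x : Fin n} :
    ∀ (l₁ : List (Fin n)) (c : Fin n) (l₂ : List (Fin n)),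
      T.sig x = l₁ ++ c :: l₂ → T.sig (T.parent c) = l₁ := by
  suffices H : ∀ d x, T.D x ≤ d → ∀ (l₁ : List (Fin n)) (c : Fin n) (l₂ : List (Fin n)),
      T.sig x = l₁ ++ c :: l₂ → T.sig (T.parent c) = l₁ from H (T.D x) x le_rfl
  intro d
  induction d with
  | zero =>
    intro x hx l₁ c l₂ h
    have hroot : x = T.root := T.D_eq_zero_iff.mp (by omega)
    rw [hroot, T.sig_root] at h
    exact absurd h.symm (List.append_ne_nil_of_right_ne_nil _ (by simp))
  | succ d ih =>
    intro x hx l₁ c l₂ h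
    by_cases hr : x = T.root
    · rw [hr, T.sig_root] at h
      exact absurd h.symm (List.append_ne_nil_of_right_ne_nil _ (by simp))
    · have hd := T.hD x hr
      by_cases hl : T.light x
      · rw [T.sig_light hl] at h
        rcases List.eq_nil_or_concat l₂ with rfl | ⟨l₂', a, rfl⟩
        · have h' : T.sig (T.parent x) ++ [x] = l₁ ++ [c] := by simpa using h
          have hlen : ([x] : List (Fin n)).length = ([c] : List (Fin n)).length := rfl
          obtain ⟨h1, h2⟩ := List.append_inj' h' rfl
          have hcx : c = x := by simpa using h2.symm
          rw [hcx, ← h1]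
        · have h' : T.sig (T.parent x) ++ [x] = (l₁ ++ c :: l₂') ++ [a] := by
            rw [h]; simp
          obtain ⟨h1, h2⟩ := List.append_inj' h' rfl
          exact ih (T.parent x) (by omega) l₁ c l₂' h1
      · rw [T.sig_heavy hr hl] at h
        exact ih (T.parent x) (by omega) l₁ c l₂ h

noncomputable def Lt (t : Fin n) : Finset (Fin n) :=
  Finset.univ.filter (fun c => T.light c ∧ T.top (T.parent c) = t)

lemma mem_Lt {t c : Fin n} : c ∈ T.Lt t ↔ T.light c ∧ T.top (T.parent c) = t := by
  simp [Lt]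

lemma Lt_anc {t c : Fin n} (h : c ∈ T.Lt t) : T.anc t c ∧ T.D t < T.D c := by
  rcases T.mem_Lt.mp h with ⟨hl, ht⟩
  have h1 : T.anc t (T.parent c) := ht ▸ T.top_anc (T.parent c)
  have h2 : T.D t ≤ T.D (T.parent c) := T.anc_depth_le h1
  have h3 := T.hD c hl.1
  exact ⟨T.anc_parent h1, by omega⟩

lemma Lt_incomp {t c1 c2 : Fin n} (h1 : c1 ∈ T.Lt t) (h2 : c2 ∈ T.Lt t) (hne : c1 ≠ c2) :
    ¬ T.anc c1 c2 := by
  intro hanc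
  have hl1 := (T.mem_Lt.mp h1).1
  have ht2 := (T.mem_Lt.mp h2).2
  have hpa : T.anc c1 (T.parent c2) := T.parent_anc hanc hne
  have htp : T.anc t (T.parent c2) := ht2 ▸ T.top_anc (T.parent c2)
  have hd1 : T.D t < T.D c1 := (T.Lt_anc h1).2
  have hdp : T.D c1 ≤ T.D (T.parent c2) := T.anc_depth_le hpa
  have hnl := T.chain_no_light (T.parent c2) (T.D c1) (by rw [ht2]; omega) hdp
  rw [T.anc_aDepth hpa] at hnl
  exact hnl hl1

/-- `c'` is before-or-equal `c` in the size-then-index order. -/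
def ord (c' c : Fin n) : Prop :=
  T.size c < T.size c' ∨ (T.size c' = T.size c ∧ c'.1 ≤ c.1)

lemma ord_refl (c : Fin n) : T.ord c c := Or.inr ⟨rfl, le_rfl⟩

lemma ord_trans {a b c : Fin n} (h1 : T.ord a b) (h2 : T.ord b c) : T.ord a c := by
  rcases h1 with h1 | ⟨h1, h1'⟩ <;> rcases h2 with h2 | ⟨h2, h2'⟩
  · exact Or.inl (by omega)
  · exact Or.inl (by omega)
  · exact Or.inl (by omega)
  · exact Or.inr ⟨by omega, by omega⟩

lemma ord_antisymm {a b : Fin n} (h1 : T.ord a b) (h2 : T.ord b a) : a = b := by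
  rcases h1 with h1 | ⟨h1, h1'⟩ <;> rcases h2 with h2 | ⟨h2, h2'⟩
  · omega
  · omega
  · omega
  · exact Fin.ext (by omega)

lemma ord_total (a b : Fin n) : T.ord a b ∨ T.ord b a := by
  rcases lt_trichotomy (T.size a) (T.size b) with h | h | h
  · exact Or.inr (Or.inl h)
  · rcases le_total a.1 b.1 with h' | h'
    · exact Or.inl (Or.inr ⟨h, h'⟩)
    · exact Or.inr (Or.inr ⟨h.symm, h'⟩)
  · exact Or.inl (Or.inl h)

noncomputable def rank (c : Fin n) : ℕ :=
  ((T.Lt (T.top (T.parent c))).filter (fun c' => T.ord c' c)).card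

lemma rank_pos {c : Fin n} (h : T.light c) : 1 ≤ T.rank c := by
  apply Finset.card_pos.mpr
  exact ⟨c, Finset.mem_filter.mpr ⟨T.mem_Lt.mpr ⟨h, rfl⟩, T.ord_refl c⟩⟩

lemma rank_inj {t c1 c2 : Fin n} (h1 : c1 ∈ T.Lt t) (h2 : c2 ∈ T.Lt t)
    (hr : T.rank c1 = T.rank c2) : c1 = c2 := by
  have ht1 : T.top (T.parent c1) = t := (T.mem_Lt.mp h1).2
  have ht2 : T.top (T.parent c2) = t := (T.mem_Lt.mp h2).2
  by_contra hne
  have key : ∀ a b : Fin n, a ∈ T.Lt t → b ∈ T.Lt t → T.ord a b → a ≠ b →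
      T.rank a < T.rank b := by
    intro a b ha hb hord hneq
    rw [rank, rank, (T.mem_Lt.mp ha).2, (T.mem_Lt.mp hb).2]
    apply Finset.card_lt_card
    constructor
    · intro x hx
      rcases Finset.mem_filter.mp hx with ⟨hx1, hx2⟩
      exact Finset.mem_filter.mpr ⟨hx1, T.ord_trans hx2 hord⟩
    · intro hsub
      have hbmem : b ∈ (T.Lt t).filter (fun c' => T.ord c' b) :=
        Finset.mem_filter.mpr ⟨hb, T.ord_refl b⟩
      have := hsub hbmem
      rcases Finset.mem_filter.mp this with ⟨_, hba⟩
      exact hneq (T.ord_antisymm hba hord).symm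
  rcases T.ord_total c1 c2 with h | h
  · exact absurd hr (Nat.ne_of_lt (key c1 c2 h1 h2 h hne))
  · exact absurd hr (Nat.ne_of_gt (key c2 c1 h2 h1 h (Ne.symm hne)))

lemma rank_size {c : Fin n} (h : T.light c) :
    T.rank c * T.size c ≤ T.size (T.top (T.parent c)) := by
  set t := T.top (T.parent c) with ht
  have hmem : c ∈ T.Lt t := T.mem_Lt.mpr ⟨h, rfl⟩
  set S := (T.Lt t).filter (fun c' => T.ord c' c) with hS
  have hsz : ∀ c' ∈ S, T.size c ≤ T.size c' := by
    intro c' hc'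
    rcases Finset.mem_filter.mp hc' with ⟨_, hord⟩
    rcases hord with h' | ⟨h', _⟩
    · omega
    · omega
  have hdisj : ∀ a ∈ S, ∀ b ∈ S, a ≠ b → Disjoint (T.sub a) (T.sub b) := by
    intro a ha b hb hne
    have haL : a ∈ T.Lt t := (Finset.mem_filter.mp ha).1
    have hbL : b ∈ T.Lt t := (Finset.mem_filter.mp hb).1
    exact T.sub_disjoint (T.Lt_incomp haL hbL hne) (T.Lt_incomp hbL haL (Ne.symm hne))
  have hcard : S.card * T.size c ≤ ∑ c' ∈ S, T.size c' := by
    calc S.card * T.size c = S.card • T.size c := by simp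
      _ ≤ ∑ c' ∈ S, T.size c' := Finset.card_nsmul_le_sum S _ _ hsz
  have hbu : ∑ c' ∈ S, T.size c' ≤ T.size t := by
    rw [size]
    have : ∑ c' ∈ S, T.size c' = (S.biUnion T.sub).card := (Finset.card_biUnion hdisj).symm
    rw [this]
    apply Finset.card_le_card
    intro x hx
    rcases Finset.mem_biUnion.mp hx with ⟨a, ha, hxa⟩
    have haL : a ∈ T.Lt t := (Finset.mem_filter.mp ha).1
    exact T.sub_mono (T.Lt_anc haL).1 hxa
  calc T.rank c * T.size c = S.card * T.size c := by rw [rank, ← ht, ← hS]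
    _ ≤ ∑ c' ∈ S, T.size c' := hcard
    _ ≤ T.size t := hbu

lemma prod_rank_size (x : Fin n) :
    ((T.sig x).map T.rank).prod * T.size (T.top x) ≤ n := by
  suffices H : ∀ d x, T.D x ≤ d →
      ((T.sig x).map T.rank).prod * T.size (T.top x) ≤ n from H (T.D x) x le_rfl
  intro d
  induction d with
  | zero =>
    intro x hx
    have hroot : x = T.root := T.D_eq_zero_iff.mp (by omega)
    rw [hroot, T.sig_root, T.top_eq_self (Or.inl rfl)]
    simpa using T.size_le T.root
  | succ d ih =>
    intro x hx
    by_cases hr : x = T.root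
    · rw [hr, T.sig_root, T.top_eq_self (Or.inl rfl)]
      simpa using T.size_le T.root
    · have hd := T.hD x hr
      by_cases hl : T.light x
      · rw [T.sig_light hl, T.top_eq_self (Or.inr hl)]
        have hih := ih (T.parent x) (by omega)
        have hrk := T.rank_size hl
        calc ((T.sig (T.parent x) ++ [x]).map T.rank).prod * T.size x
            = ((T.sig (T.parent x)).map T.rank).prod * (T.rank x * T.size x) := by
              simp [List.map_append]; ring
          _ ≤ ((T.sig (T.parent x)).map T.rank).prod * T.size (T.top (T.parent x)) :=
              Nat.mul_le_mul_left _ hrk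
          _ ≤ n := hih
      · rw [T.sig_heavy hr hl, T.top_eq_parent (by tauto)]
        exact ih (T.parent x) (by omega)

lemma pow_sig_len (x : Fin n) : 2 ^ (T.sig x).length * T.size x ≤ n := by
  suffices H : ∀ d x, T.D x ≤ d → 2 ^ (T.sig x).length * T.size x ≤ n from
    H (T.D x) x le_rfl
  intro d
  induction d with
  | zero =>
    intro x hx
    have hroot : x = T.root := T.D_eq_zero_iff.mp (by omega)
    rw [hroot, T.sig_root]
    simpa using T.size_le T.root
  | succ d ih =>
    intro x hx
    by_cases hr : x = T.root
    · rw [hr, T.sig_root]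
      simpa using T.size_le T.root
    · have hd := T.hD x hr
      by_cases hl : T.light x
      · rw [T.sig_light hl]
        have hih := ih (T.parent x) (by omega)
        have hhalf := T.light_halving hl
        calc 2 ^ (T.sig (T.parent x) ++ [x]).length * T.size x
            = 2 ^ (T.sig (T.parent x)).length * (2 * T.size x) := by
              simp [List.length_append]; ring
          _ ≤ 2 ^ (T.sig (T.parent x)).length * T.size (T.parent x) :=
              Nat.mul_le_mul_left _ hhalf
          _ ≤ n := hih
      · rw [T.sig_heavy hr hl]
        have hih := ih (T.parent x) (by omega)
        have := T.size_mono (T.anc_parent_self x)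
        calc 2 ^ (T.sig (T.parent x)).length * T.size x
            ≤ 2 ^ (T.sig (T.parent x)).length * T.size (T.parent x) :=
              Nat.mul_le_mul_left _ this
          _ ≤ n := hih

end HeavyLight

end RTree

section GraphPart
open SimpleGraph

lemma supp_dist_le {n : ℕ} {G : SimpleGraph (Fin n)} {a b z : Fin n} (w : G.Walk a b)
    (hz : z ∈ w.support) : G.dist z b ≤ w.length := by
  have hsplit := w.take_spec hz
  have hlen : (w.takeUntil z hz).length + (w.dropUntil z hz).length = w.length := by
    rw [← SimpleGraph.Walk.length_append, hsplit]
  have := SimpleGraph.dist_le (w.dropUntil z hz)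
  omega

theorem exists_rtree {n : ℕ} (hn : 0 < n) {G : SimpleGraph (Fin n)} (hG : G.IsTree) :
    ∃ T : RTree n, ∀ u v, (G.dist u v : ℤ) = T.tdist u v := by
  classical
  have hconn : G.Connected := hG.isConnected
  set r : Fin n := ⟨0, hn⟩ with hr
  have hDr : G.dist r r = 0 := SimpleGraph.dist_self
  -- existence of a neighbor closer to the root
  have hlow : ∀ u : Fin n, u ≠ r → ∃ y, G.Adj u y ∧ G.dist y r + 1 = G.dist u r := by
    intro u hu
    obtain ⟨w, hw⟩ := hconn.exists_walk_length_eq_dist u r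
    cases w with
    | nil => exact absurd rfl hu
    | cons h q =>
      rename_i y
      have h1 : G.dist y r ≤ q.length := SimpleGraph.dist_le q
      have h2 : G.dist u r ≤ G.dist u y + G.dist y r := hconn.dist_triangle
      have h3 : G.dist u y ≤ 1 := by simpa using SimpleGraph.dist_le h.toWalk
      simp only [Walk.length_cons] at hw
      exact ⟨y, h, by omega⟩
  -- uniqueness of such a neighbor
  have huniq : ∀ u y₁ y₂, G.Adj u y₁ → G.Adj u y₂ → G.dist y₁ r + 1 = G.dist u r →
      G.dist y₂ r + 1 = G.dist u r → y₁ = y₂ := by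
    intro u y₁ y₂ ha1 ha2 hd1 hd2
    have key : ∀ y, G.Adj u y → G.dist y r + 1 = G.dist u r →
        ∃ p : G.Walk y r, p.IsPath ∧ p.length + 1 = G.dist u r ∧ u ∉ p.support := by
      intro y hay hdy
      obtain ⟨w, hw⟩ := hconn.exists_walk_length_eq_dist y r
      have hge : G.dist y r ≤ w.bypass.length := SimpleGraph.dist_le _
      have hle := SimpleGraph.Walk.length_bypass_le w
      refine ⟨w.bypass, w.bypass_isPath, by omega, ?_⟩
      intro hmem
      have h5 := supp_dist_le w.bypass hmem
      omega
    obtain ⟨p1, hp1, hl1, hu1⟩ := key y₁ ha1 hd1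
    obtain ⟨p2, hp2, hl2, hu2⟩ := key y₂ ha2 hd2
    have hP1 : (Walk.cons ha1 p1).IsPath := hp1.cons hu1
    have hP2 : (Walk.cons ha2 p2).IsPath := hp2.cons hu2
    have hPeq := hG.IsAcyclic.path_unique ⟨_, hP1⟩ ⟨_, hP2⟩
    have heq : (Walk.cons ha1 p1) = (Walk.cons ha2 p2) := congrArg Subtype.val hPeq
    have h1 : (Walk.cons ha1 p1).getVert 1 = y₁ := by rw [Walk.getVert_cons p1 ha1 one_ne_zero]; exact p1.getVert_zero
    have h2 : (Walk.cons ha2 p2).getVert 1 = y₂ := by rw [Walk.getVert_cons p2 ha2 one_ne_zero]; exact p2.getVert_zero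
    rw [← h1, ← h2, heq]
  -- depth dichotomy along an edge
  have hdich : ∀ x y, G.Adj x y →
      G.dist y r + 1 = G.dist x r ∨ G.dist x r + 1 = G.dist y r := by
    intro x y hxy
    have h3 : G.dist x y ≤ 1 := by simpa using SimpleGraph.dist_le hxy.toWalk
    have h4 : G.dist y x ≤ 1 := by simpa using SimpleGraph.dist_le hxy.symm.toWalk
    have t1 : G.dist x r ≤ G.dist x y + G.dist y r := hconn.dist_triangle
    have t2 : G.dist y r ≤ G.dist y x + G.dist x r := hconn.dist_triangle
    have hne : G.dist x r ≠ G.dist y r := by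
      intro heqd
      obtain ⟨w, hw⟩ := hconn.exists_walk_length_eq_dist y r
      have hwp : w.IsPath := w.isPath_of_length_eq_dist hw
      by_cases hx : x ∈ w.support
      · have hlen : (w.takeUntil x hx).length + (w.dropUntil x hx).length = w.length := by
          rw [← SimpleGraph.Walk.length_append, w.take_spec hx]
        have hd1 : G.dist y x ≤ (w.takeUntil x hx).length := SimpleGraph.dist_le _
        have hd2 : G.dist x r ≤ (w.dropUntil x hx).length := SimpleGraph.dist_le _
        have hyx : 0 < G.dist y x := hconn.pos_dist_of_ne (Ne.symm (G.ne_of_adj hxy))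
        omega
      · obtain ⟨w2, hw2⟩ := hconn.exists_walk_length_eq_dist x r
        have hwp2 : w2.IsPath := w2.isPath_of_length_eq_dist hw2
        have hP1 : (Walk.cons hxy w).IsPath := hwp.cons hx
        have hPeq := hG.IsAcyclic.path_unique ⟨_, hP1⟩ ⟨_, hwp2⟩
        have heq2 : (Walk.cons hxy w) = w2 := congrArg Subtype.val hPeq
        have hlen2 : (Walk.cons hxy w).length = w2.length := by rw [heq2]
        simp only [Walk.length_cons] at hlen2
        omega
    omega
  -- the parent function
  let par : Fin n → Fin n := fun u => if h : u = r then u else (hlow u h).choose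
  have hpar_adj : ∀ u, u ≠ r → G.Adj u (par u) ∧ G.dist (par u) r + 1 = G.dist u r := by
    intro u h
    simp only [par, dif_neg h]
    exact (hlow u h).choose_spec
  obtain ⟨T, TD, Tpar, Troot⟩ : ∃ T : RTree n,
      (∀ x, T.D x = G.dist x r) ∧ (∀ x, T.parent x = par x) ∧ T.root = r :=
    ⟨⟨par, r, fun u => G.dist u r, by simp [par], hDr, fun u h => (hpar_adj u h).2⟩,
      fun _ => rfl, fun _ => rfl, rfl⟩
  refine ⟨T, ?_⟩
  have hTadj : ∀ u, u ≠ T.root → G.Adj u (T.parent u) := by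
    intro u h
    rw [Tpar]
    exact (hpar_adj u (by rwa [Troot] at h)).1
  -- adjacency gives parent relation
  have hadjpar : ∀ x y, G.Adj x y → y = par x ∨ x = par y := by
    intro x y hxy
    rcases hdich x y hxy with h | h
    · left
      have hxr : x ≠ r := by intro hx; rw [hx, hDr] at h; omega
      obtain ⟨ha, hd⟩ := hpar_adj x hxr
      exact huniq x y (par x) hxy ha h hd
    · right
      have hyr : y ≠ r := by intro hy; rw [hy, hDr] at h; omega
      obtain ⟨ha, hd⟩ := hpar_adj y hyr
      exact huniq y x (par y) hxy.symm ha h hd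
  -- distance to an ancestor is at most the depth difference
  have hanc_dist : ∀ (k : ℕ) (x : Fin n), k ≤ T.D x → G.dist x (T.parent^[k] x) ≤ k := by
    intro k
    induction k with
    | zero => intro x _; simp
    | succ k ih =>
      intro x hk
      have h1 := ih x (by omega)
      have hne : T.parent^[k] x ≠ T.root := by
        have hiter := T.iter_depth k x (by omega)
        intro heq; rw [heq, T.hDroot] at hiter; omega
      have hadj : G.Adj (T.parent^[k] x) (T.parent (T.parent^[k] x)) := hTadj _ hne
      have h2 : G.dist (T.parent^[k] x) (T.parent^[k+1] x) ≤ 1 := by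
        rw [Function.iterate_succ_apply']
        simpa using SimpleGraph.dist_le hadj.toWalk
      have h3 : G.dist x (T.parent^[k+1] x) ≤
          G.dist x (T.parent^[k] x) + G.dist (T.parent^[k] x) (T.parent^[k+1] x) :=
        hconn.dist_triangle
      omega
  -- upper bound
  have hupper : ∀ u v, (G.dist u v : ℤ) ≤ T.tdist u v := by
    intro u v
    have hle1 := T.lca_depth_le_left u v
    have hle2 := T.lca_depth_le_right u v
    have h1 : G.dist u (T.lca u v) ≤ T.D u - T.D (T.lca u v) := by
      have := hanc_dist (T.D u - T.D (T.lca u v)) u (by omega)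
      rwa [T.anc_witness (T.lca_anc_left u v)] at this
    have h2 : G.dist v (T.lca u v) ≤ T.D v - T.D (T.lca u v) := by
      have := hanc_dist (T.D v - T.D (T.lca u v)) v (by omega)
      rwa [T.anc_witness (T.lca_anc_right u v)] at this
    have h3 : G.dist u v ≤ G.dist u (T.lca u v) + G.dist (T.lca u v) v := hconn.dist_triangle
    have h4 : G.dist (T.lca u v) v = G.dist v (T.lca u v) := SimpleGraph.dist_comm
    rw [RTree.tdist]
    simp only [TD] at h1 h2 hle1 hle2 ⊢
    omega
  -- potential step along an edge
  have hg : ∀ u x y, G.Adj x y → T.tdist u y ≤ T.tdist u x + 1 := by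
    intro u x y hxy
    have key : ∀ a, a ≠ T.root →
        T.tdist u (T.parent a) = T.tdist u a + 1 ∨
        T.tdist u (T.parent a) = T.tdist u a - 1 := by
      intro a har
      have hdp : T.D (T.parent a) + 1 = T.D a := T.hD a har
      by_cases hanc : T.anc a u
      · left
        have hla : T.lca u a = a := T.lca_of_anc_left hanc
        have hpanc : T.anc (T.parent a) u := T.anc_trans (T.anc_parent_self a) hanc
        have hlp : T.lca u (T.parent a) = T.parent a := T.lca_of_anc_left hpanc
        rw [RTree.tdist, RTree.tdist, hla, hlp]
        simp only [TD] at hdp ⊢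
        push_cast
        omega
      · right
        have hlp := T.lca_parent (u := u) (x := a) hanc
        rw [RTree.tdist, RTree.tdist, ← hlp]
        simp only [TD] at hdp ⊢
        push_cast
        omega
    rcases hadjpar x y hxy with h | h
    · have hxr : x ≠ T.root := by
        intro hx
        rw [Troot] at hx
        have hpxx : par x = x := by simp [par, hx]
        rw [hpxx] at h
        exact (G.ne_of_adj hxy) h.symm
      have hpx : y = T.parent x := by rw [Tpar]; exact h
      rw [hpx]
      rcases key x hxr with hk | hk <;> omega
    · have hyr : y ≠ T.root := by
        intro hy
        rw [Troot] at hy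
        have hpyy : par y = y := by simp [par, hy]
        rw [hpyy] at h
        exact (G.ne_of_adj hxy) h
      have hpy : x = T.parent y := by rw [Tpar]; exact h
      rw [hpy] at *
      rcases key y hyr with hk | hk <;> omega
  -- walks give lower bounds
  have hwalk : ∀ u x v (p : G.Walk x v), T.tdist u v ≤ T.tdist u x + p.length := by
    intro u x v p
    induction p with
    | nil => simp
    | @cons a b c h q ih =>
      have h1 := hg u a b h
      have h2 : (Walk.cons h q).length = q.length + 1 := Walk.length_cons _ _
      rw [h2]
      push_cast
      omega
  have hlower : ∀ u v, T.tdist u v ≤ (G.dist u v : ℤ) := by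
    intro u v
    obtain ⟨p, hp⟩ := hconn.exists_walk_length_eq_dist u v
    have h1 := hwalk u u v p
    have h0 : T.tdist u u = 0 := by rw [RTree.tdist, T.lca_self]; ring
    rw [h0, hp] at h1
    omega
  intro u v
  exact le_antisymm (hupper u v) (hlower u v)

end GraphPart

section Decoder

/-- length of the longest common prefix -/
def cpl : List ℕ → List ℕ → ℕ
  | a :: as, b :: bs => if a = b then cpl as bs + 1 else 0
  | _, _ => 0

lemma cpl_nil_left (b : List ℕ) : cpl [] b = 0 := by cases b <;> rfl

lemma cpl_nil_right (a : List ℕ) : cpl a [] = 0 := by cases a <;> rfl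

lemma cpl_cons (x y : ℕ) (xs ys : List ℕ) :
    cpl (x :: xs) (y :: ys) = if x = y then cpl xs ys + 1 else 0 := rfl

lemma cpl_le_left : ∀ a b : List ℕ, cpl a b ≤ a.length := by
  intro a
  induction a with
  | nil => intro b; rw [cpl_nil_left]; simp
  | cons x xs ih =>
    intro b
    cases b with
    | nil => rw [cpl_nil_right]; simp
    | cons y ys =>
      rw [cpl_cons]
      split_ifs
      · have := ih ys; simp; omega
      · simp

lemma cpl_le_right : ∀ a b : List ℕ, cpl a b ≤ b.length := by
  intro a
  induction a with
  | nil => intro b; rw [cpl_nil_left]; simp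
  | cons x xs ih =>
    intro b
    cases b with
    | nil => rw [cpl_nil_right]; simp
    | cons y ys =>
      rw [cpl_cons]
      split_ifs
      · have := ih ys; simp; omega
      · simp

lemma cpl_getD : ∀ (a b : List ℕ) (j : ℕ), j < cpl a b → a.getD j 0 = b.getD j 0 := by
  intro a
  induction a with
  | nil => intro b j h; rw [cpl_nil_left] at h; omega
  | cons x xs ih =>
    intro b j h
    cases b with
    | nil => rw [cpl_nil_right] at h; omega
    | cons y ys =>
      rw [cpl_cons] at h
      split_ifs at h with hxy
      · cases j with
        | zero => simpa using hxy
        | succ j => simpa using ih ys j (by omega)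
      · omega

lemma cpl_ne : ∀ (a b : List ℕ), cpl a b < a.length → cpl a b < b.length →
    a.getD (cpl a b) 0 ≠ b.getD (cpl a b) 0 := by
  intro a
  induction a with
  | nil => intro b h1 h2; simp at h1
  | cons x xs ih =>
    intro b h1 h2
    cases b with
    | nil => simp at h2
    | cons y ys =>
      rw [cpl_cons] at h1 h2 ⊢
      split_ifs at h1 h2 ⊢ with hxy
      · have := ih ys (by simpa using h1) (by simpa using h2)
        simpa using this
      · simpa using hxy

lemma getD_of_lt (l : List ℕ) {i : ℕ} (h : i < l.length) : l.getD i 0 = l[i] := by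
  simp [List.getD_eq_getElem?_getD, List.getElem?_eq_getElem h]

lemma zip_sub_headD (l : List ℕ)
    (hm : ∀ i, i + 1 < l.length → l.getD (i+1) 0 ≤ l.getD i 0) :
    ∀ i, i < l.length →
      l.headD 0 - ((List.zipWith (fun a b => a - b) l l.tail).take i).sum = l.getD i 0 := by
  induction l with
  | nil => intro i h; simp at h
  | cons a t ih =>
    intro i hi
    cases i with
    | zero => simp
    | succ i =>
      cases t with
      | nil => simp at hi
      | cons b t' =>
        have hba : b ≤ a := by simpa using hm 0 (by simp)
        have hm' : ∀ j, j + 1 < (b :: t').length →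
            (b :: t').getD (j+1) 0 ≤ (b :: t').getD j 0 := by
          intro j hj
          have := hm (j+1) (by simp at hj ⊢; omega)
          simpa using this
        have hih := ih hm' i (by simpa using hi)
        simp only [List.tail_cons, List.zipWith_cons_cons, List.take_succ_cons,
          List.sum_cons, List.headD_cons] at hih ⊢
        have hgd : (a :: b :: t').getD (i+1) 0 = (b :: t').getD i 0 := by simp
        rw [hgd, ← hih]
        omega

lemma zip_sub_sum_le (l : List ℕ)
    (hm : ∀ i, i + 1 < l.length → l.getD (i+1) 0 ≤ l.getD i 0) :
    (List.zipWith (fun a b => a - b) l l.tail).sum ≤ l.headD 0 := by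
  induction l with
  | nil => simp
  | cons a t ih =>
    cases t with
    | nil => simp
    | cons b t' =>
      have hba : b ≤ a := by simpa using hm 0 (by simp)
      have hm' : ∀ j, j + 1 < (b :: t').length →
          (b :: t').getD (j+1) 0 ≤ (b :: t').getD j 0 := by
        intro j hj
        have := hm (j+1) (by simp at hj ⊢; omega)
        simpa using this
      have hih := ih hm'
      simp only [List.tail_cons, List.zipWith_cons_cons, List.sum_cons,
        List.headD_cons] at hih ⊢
      omega

/-- decoder components -/
def pD (l : List ℕ) : ℕ := l.getD 0 0
def pk (l : List ℕ) : ℕ := l.getD 1 0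
def pranks (l : List ℕ) : List ℕ := (l.drop 3).take (pk l)
def ptau (l : List ℕ) (i : ℕ) : ℕ := l.getD 2 0 - ((l.drop (3 + pk l)).take i).sum

noncomputable def cand (M : ℕ) (l : List ℕ) (m : ℕ) : ℤ :=
  if m < pk l then (pD l : ℤ) - fM M (ptau l m) else (pD l : ℤ)

noncomputable def est (M : ℕ) (lx ly : List ℕ) : ℕ :=
  (((pD lx : ℤ) + (pD ly : ℤ)) -
    2 * min (cand M lx (cpl (pranks lx) (pranks ly)))
            (cand M ly (cpl (pranks lx) (pranks ly)))).toNat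

end Decoder

section LabelData
namespace RTree

variable {n : ℕ} (T : RTree n)

noncomputable def rks (u : Fin n) : List ℕ := (T.sig u).map T.rank

noncomputable def taus (M : ℕ) (u : Fin n) : List ℕ :=
  (T.sig u).map (fun c => tIdx M (T.D u + 1 - T.D c))

noncomputable def gps (M : ℕ) (u : Fin n) : List ℕ :=
  List.zipWith (fun a b => a - b) (taus T M u) (taus T M u).tail

noncomputable def data (M : ℕ) (u : Fin n) : List ℕ :=
  T.D u :: (T.sig u).length :: (taus T M u).headD 0 :: (rks T u ++ gps T M u)

lemma rks_length (u : Fin n) : (rks T u).length = (T.sig u).length := by simp [rks]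

lemma taus_length (M : ℕ) (u : Fin n) : (taus T M u).length = (T.sig u).length := by
  simp [taus]

lemma pD_data (M : ℕ) (u : Fin n) : pD (data T M u) = T.D u := rfl

lemma pk_data (M : ℕ) (u : Fin n) : pk (data T M u) = (T.sig u).length := rfl

lemma pranks_data (M : ℕ) (u : Fin n) : pranks (data T M u) = rks T u := by
  have h1 : (data T M u).drop 3 = rks T u ++ gps T M u := rfl
  rw [pranks, pk_data, h1, ← rks_length T u, List.take_left]

lemma drop_data (M : ℕ) (u : Fin n) :
    (data T M u).drop (3 + (T.sig u).length) = gps T M u := by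
  have h1 : (data T M u).drop 3 = rks T u ++ gps T M u := rfl
  have h2 : (3 : ℕ) + (T.sig u).length = 3 + (T.sig u).length := rfl
  calc (data T M u).drop (3 + (T.sig u).length)
      = ((data T M u).drop 3).drop ((T.sig u).length) := by rw [List.drop_drop]
    _ = (rks T u ++ gps T M u).drop ((T.sig u).length) := by rw [h1]
    _ = gps T M u := by rw [← rks_length T u, List.drop_left]

/-- structural facts along `sig` -/
lemma sig_decomp {u : Fin n} {j : ℕ} (hj : j < (T.sig u).length) :
    T.sig u = (T.sig u).take j ++ (T.sig u)[j] :: (T.sig u).drop (j+1) := by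
  rw [← List.drop_eq_getElem_cons hj, List.take_append_drop]

lemma sig_parent_get {u : Fin n} {j : ℕ} (hj : j < (T.sig u).length) :
    T.sig (T.parent ((T.sig u)[j])) = (T.sig u).take j :=
  T.sig_parent_chain _ _ _ (T.sig_decomp hj)

lemma top_parent_get_zero {u : Fin n} (h0 : 0 < (T.sig u).length) :
    T.top (T.parent ((T.sig u)[0])) = T.root := by
  have hchain := T.sig_parent_get h0
  simp only [List.take_zero] at hchain
  rcases T.top_sig (T.parent ((T.sig u)[0])) with ⟨_, htop⟩ | ⟨l, c, hsig, _⟩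
  · exact htop
  · rw [hchain] at hsig
    exact absurd hsig.symm (List.append_ne_nil_of_right_ne_nil _ (by simp))

lemma top_parent_get_succ {u : Fin n} {j : ℕ} (hj : j + 1 < (T.sig u).length) :
    T.top (T.parent ((T.sig u)[j+1])) = (T.sig u)[j]'(by omega) := by
  have hchain := T.sig_parent_get hj
  rcases T.top_sig (T.parent ((T.sig u)[j+1])) with ⟨hsig, _⟩ | ⟨l, c, hsig, htop⟩
  · rw [hchain] at hsig
    have hlen : min (j+1) (T.sig u).length = 0 := by
      simpa using congrArg List.length hsig
    omega
  · rw [hchain] at hsig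
    have hlen := congrArg List.length hsig
    simp only [List.length_take, List.length_append, List.length_singleton] at hlen
    have hll : l.length = j := by omega
    have hb : j < ((T.sig u).take (j+1)).length := by
      rw [List.length_take]; omega
    have hc : ((T.sig u).take (j+1))[j]'hb = c := by
      have h1 := List.getElem_of_eq hsig hb
      rw [h1]
      exact List.getElem_concat_length hll.symm (by simp [hsig] at hb ⊢; omega)
    have hc2 : (T.sig u)[j]'(by omega) = ((T.sig u).take (j+1))[j]'hb :=
      List.getElem_take' (xs := T.sig u) (by omega) (by omega)
    rw [htop, hc2, hc]

lemma top_of_sig_nil {u : Fin n} (h : (T.sig u).length = 0) : T.top u = T.root := by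
  rcases T.top_sig u with ⟨_, htop⟩ | ⟨l, c, hsig, _⟩
  · exact htop
  · rw [hsig] at h; simp at h

lemma top_of_sig_last {u : Fin n} (h : 0 < (T.sig u).length) :
    T.top u = (T.sig u)[(T.sig u).length - 1]'(by omega) := by
  rcases T.top_sig u with ⟨hsig, _⟩ | ⟨l, c, hsig, htop⟩
  · rw [hsig] at h; simp at h
  · have hlen := congrArg List.length hsig
    simp only [List.length_append, List.length_singleton] at hlen
    have hc : (T.sig u)[(T.sig u).length - 1]'(by omega) = c := by
      have : (T.sig u).length - 1 = l.length := by omega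
      rw [List.getElem_of_eq hsig]
      exact List.getElem_concat_length this _
    rw [htop, ← hc]

lemma sig_get_light {u : Fin n} {j : ℕ} (hj : j < (T.sig u).length) :
    T.light ((T.sig u)[j]) ∧ T.anc ((T.sig u)[j]) u :=
  T.mem_sig (List.getElem_mem hj)

lemma sig_depth_succ {u : Fin n} {j : ℕ} (hj : j + 1 < (T.sig u).length) :
    T.D ((T.sig u)[j]'(by omega)) < T.D ((T.sig u)[j+1]) := by
  have htop := T.top_parent_get_succ hj
  have h2 : T.D ((T.sig u)[j]'(by omega)) ≤ T.D (T.parent ((T.sig u)[j+1])) := by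
    rw [← htop]
    exact T.anc_depth_le (T.top_anc _)
  have hlight1 := (T.sig_get_light (u := u) (j := j+1) hj).1
  have hD1 : T.D (T.parent ((T.sig u)[j+1])) + 1 = T.D ((T.sig u)[j+1]) :=
    T.hD _ hlight1.1
  omega

/-- the lca-locating lemmas -/
lemma lca_top_top {u v t : Fin n} (htu : T.top u = t) (htv : T.top v = t) :
    T.D (T.lca u v) = min (T.D u) (T.D v) := by
  rcases T.comparable_of_top htu htv with h | h
  · rw [T.lca_of_anc_right h]
    have := T.anc_depth_le h
    omega
  · rw [T.lca_of_anc_left h]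
    have := T.anc_depth_le h
    omega

lemma lca_exit_chain {u v t c : Fin n} (hlc : T.light c) (hcu : T.anc c u)
    (htc : T.top (T.parent c) = t) (htv : T.top v = t) :
    T.D (T.lca u v) = min (T.D (T.parent c)) (T.D v) := by
  have hwanc_u : T.anc (T.parent c) u := T.anc_trans (T.anc_parent_self c) hcu
  have hDc : T.D (T.parent c) + 1 = T.D c := T.hD c hlc.1
  have hDtw : T.D t ≤ T.D (T.parent c) := T.anc_depth_le (htc ▸ T.top_anc (T.parent c))
  have hDtv : T.D t ≤ T.D v := T.anc_depth_le (htv ▸ T.top_anc v)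
  rcases le_or_gt (T.D v) (T.D (T.parent c)) with hle | hlt
  · have hvw : T.anc v (T.parent c) := by
      rcases T.comparable_of_top htv htc with h | h
      · exact h
      · have heq : T.parent c = v := T.anc_eq_of_depth h (by have := T.anc_depth_le h; omega)
        rw [← heq]; exact T.anc_refl _
    have hl : T.lca u v = v := T.lca_of_anc_left (T.anc_trans hvw hwanc_u)
    rw [hl]
    omega
  · have hwv : T.anc (T.parent c) v := by
      rcases T.comparable_of_top htc htv with h | h
      · exact h
      · have := T.anc_depth_le h; omega
    have hlca : T.lca u v = T.parent c := by
      apply T.lca_eq_of hwanc_u hwv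
      intro z hzu hzv
      by_contra hzw
      have hwz : T.anc (T.parent c) z := by
        rcases T.anc_comparable hzu hwanc_u with h | h
        · exact absurd h hzw
        · exact h
      have hne : z ≠ T.parent c := by rintro rfl; exact hzw (T.anc_refl _)
      have hDz : T.D (T.parent c) + 1 ≤ T.D z := by
        have h1 := T.anc_depth_le hwz
        rcases eq_or_lt_of_le h1 with h2 | h2
        · exact absurd (T.anc_eq_of_depth hwz h2).symm hne
        · omega
      have hau : T.aDepth (T.D (T.parent c) + 1) u = c := by
        rw [hDc]; exact T.anc_aDepth hcu
      have hwav : T.aDepth (T.D (T.parent c)) v = T.parent c := by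
        have := T.chains_coincide htv htc (T.D (T.parent c)) hDtw (by omega) le_rfl
        rwa [T.aDepth_self] at this
      have hav : T.aDepth (T.D (T.parent c) + 1) v = T.hC (T.parent c) := by
        have hstep := T.chain_step (x := v) (j := T.D (T.parent c)) (by rw [htv]; omega)
          (by omega)
        rw [hstep, hwav]
      have h1 : T.aDepth (T.D (T.parent c) + 1) u = T.aDepth (T.D (T.parent c) + 1) z :=
        T.anc_aDepth_agree hzu hDz
      have h2 : T.aDepth (T.D (T.parent c) + 1) v = T.aDepth (T.D (T.parent c) + 1) z :=
        T.anc_aDepth_agree hzv hDz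
      rw [hau] at h1
      rw [hav] at h2
      exact hlc.2 (h1.trans h2.symm)
    rw [hlca]
    omega

lemma lca_exit_exit_le {u v t cu cv : Fin n} (hlcu : T.light cu) (hcu : T.anc cu u)
    (htcu : T.top (T.parent cu) = t) (hlcv : T.light cv) (hcv : T.anc cv v)
    (htcv : T.top (T.parent cv) = t) (hne : cu ≠ cv)
    (hd : T.D (T.parent cu) ≤ T.D (T.parent cv)) :
    T.D (T.lca u v) = T.D (T.parent cu) := by
  have hwu_u : T.anc (T.parent cu) u := T.anc_trans (T.anc_parent_self cu) hcu
  have hwv_v : T.anc (T.parent cv) v := T.anc_trans (T.anc_parent_self cv) hcv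
  have hDcu : T.D (T.parent cu) + 1 = T.D cu := T.hD cu hlcu.1
  have hDcv : T.D (T.parent cv) + 1 = T.D cv := T.hD cv hlcv.1
  have hDtwu : T.D t ≤ T.D (T.parent cu) := T.anc_depth_le (htcu ▸ T.top_anc (T.parent cu))
  have hwuwv : T.anc (T.parent cu) (T.parent cv) := by
    rcases T.comparable_of_top htcu htcv with h | h
    · exact h
    · have h1 := T.anc_depth_le h
      have heq : T.parent cv = T.parent cu := T.anc_eq_of_depth h (by omega)
      rw [heq]; exact T.anc_refl _
  have hwu_v : T.anc (T.parent cu) v := T.anc_trans hwuwv hwv_v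
  have hlca : T.lca u v = T.parent cu := by
    apply T.lca_eq_of hwu_u hwu_v
    intro z hzu hzv
    by_contra hzw
    have hwz : T.anc (T.parent cu) z := by
      rcases T.anc_comparable hzu hwu_u with h | h
      · exact absurd h hzw
      · exact h
    have hne' : z ≠ T.parent cu := by rintro rfl; exact hzw (T.anc_refl _)
    have hDz : T.D (T.parent cu) + 1 ≤ T.D z := by
      have h1 := T.anc_depth_le hwz
      rcases eq_or_lt_of_le h1 with h2 | h2
      · exact absurd (T.anc_eq_of_depth hwz h2).symm hne'
      · omega
    have hau : T.aDepth (T.D (T.parent cu) + 1) u = cu := by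
      rw [hDcu]; exact T.anc_aDepth hcu
    have h1 : T.aDepth (T.D (T.parent cu) + 1) u = T.aDepth (T.D (T.parent cu) + 1) z :=
      T.anc_aDepth_agree hzu hDz
    have h2 : T.aDepth (T.D (T.parent cu) + 1) v = T.aDepth (T.D (T.parent cu) + 1) z :=
      T.anc_aDepth_agree hzv (by omega)
    have hav : T.aDepth (T.D (T.parent cu) + 1) v = cu := by
      rw [h2, ← h1]
      exact hau
    rcases eq_or_lt_of_le hd with hdeq | hdlt
    · -- same exit vertex: then aDepth (D wu + 1) v = cv
      have hweq : T.parent cv = T.parent cu := (T.anc_eq_of_depth hwuwv hdeq).symm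
      have hav2 : T.aDepth (T.D (T.parent cu) + 1) v = cv := by
        rw [← hweq, hDcv]
        exact T.anc_aDepth hcv
      exact hne (by rw [← hav, hav2])
    · -- wu strictly above wv : aDepth (D wu + 1) v = hC wu
      have hwuav : T.aDepth (T.D (T.parent cu)) (T.parent cv) = T.parent cu := by
        have := T.chains_coincide htcv htcu (T.D (T.parent cu)) hDtwu (by omega) le_rfl
        rwa [T.aDepth_self] at this
      have hstep : T.aDepth (T.D (T.parent cu) + 1) (T.parent cv) =
          T.hC (T.aDepth (T.D (T.parent cu)) (T.parent cv)) :=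
        T.chain_step (by rw [htcv]; omega) (by omega)
      have hagree : T.aDepth (T.D (T.parent cu) + 1) v =
          T.aDepth (T.D (T.parent cu) + 1) (T.parent cv) :=
        T.anc_aDepth_agree hwv_v (by omega)
      rw [hagree, hstep, hwuav] at hav
      exact hlcu.2 hav.symm
  rw [hlca]

lemma lca_exit_exit {u v t cu cv : Fin n} (hlcu : T.light cu) (hcu : T.anc cu u)
    (htcu : T.top (T.parent cu) = t) (hlcv : T.light cv) (hcv : T.anc cv v)
    (htcv : T.top (T.parent cv) = t) (hne : cu ≠ cv) :
    T.D (T.lca u v) = min (T.D (T.parent cu)) (T.D (T.parent cv)) := by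
  rcases le_total (T.D (T.parent cu)) (T.D (T.parent cv)) with h | h
  · rw [T.lca_exit_exit_le hlcu hcu htcu hlcv hcv htcv hne h]
    omega
  · rw [T.lca_comm]
    rw [T.lca_exit_exit_le hlcv hcv htcv hlcu hcu htcu (Ne.symm hne) h]
    omega

end RTree
end LabelData

section Correct
set_option maxHeartbeats 1000000
namespace RTree

variable {n : ℕ} (T : RTree n)

lemma rks_getD {u : Fin n} {j : ℕ} (hj : j < (T.sig u).length) :
    (rks T u).getD j 0 = T.rank ((T.sig u)[j]) := by
  rw [getD_of_lt _ (by rw [rks_length]; exact hj)]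
  simp [rks]

lemma matching (u v : Fin n) : ∀ j, j < cpl (rks T u) (rks T v) →
    ∀ (hju : j < (T.sig u).length) (hjv : j < (T.sig v).length),
    (T.sig u)[j] = (T.sig v)[j] := by
  intro j
  induction j using Nat.strong_induction_on with
  | _ j ih =>
    intro hj hju hjv
    have hr : T.rank ((T.sig u)[j]) = T.rank ((T.sig v)[j]) := by
      have h := cpl_getD _ _ j hj
      rwa [T.rks_getD hju, T.rks_getD hjv] at h
    have hlu := T.sig_get_light hju
    have hlv := T.sig_get_light hjv
    cases j with
    | zero =>
      have h1 := T.top_parent_get_zero (u := u) hju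
      have h2 := T.top_parent_get_zero (u := v) hjv
      exact T.rank_inj (T.mem_Lt.mpr ⟨hlu.1, h1⟩) (T.mem_Lt.mpr ⟨hlv.1, h2⟩) hr
    | succ i =>
      have hprev : (T.sig u)[i]'(by omega) = (T.sig v)[i]'(by omega) :=
        ih i (by omega) (by omega) (by omega) (by omega)
      have h1 := T.top_parent_get_succ (u := u) hju
      have h2 := T.top_parent_get_succ (u := v) hjv
      rw [← hprev] at h2
      exact T.rank_inj (T.mem_Lt.mpr ⟨hlu.1, h1⟩) (T.mem_Lt.mpr ⟨hlv.1, h2⟩) hr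

lemma taus_mono (M : ℕ) (u : Fin n) :
    ∀ i, i + 1 < (taus T M u).length →
      (taus T M u).getD (i+1) 0 ≤ (taus T M u).getD i 0 := by
  intro i hi
  rw [taus_length] at hi
  rw [getD_of_lt _ (by rw [taus_length]; omega), getD_of_lt _ (by rw [taus_length]; omega)]
  simp only [taus, List.getElem_map]
  apply tIdx_mono
  have := T.sig_depth_succ (u := u) (j := i) hi
  omega

lemma ptau_data (M : ℕ) {u : Fin n} {m : ℕ} (hm : m < (T.sig u).length) :
    ptau (data T M u) m = tIdx M (T.D u + 1 - T.D ((T.sig u)[m])) := by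
  have h2 : (data T M u).getD 2 0 = (taus T M u).headD 0 := rfl
  have h3 : (data T M u).drop (3 + pk (data T M u)) = gps T M u := by
    rw [pk_data]; exact T.drop_data M u
  rw [ptau, h2, h3, gps]
  have h4 := zip_sub_headD (taus T M u) (T.taus_mono M u) m (by rw [taus_length]; exact hm)
  rw [h4, getD_of_lt _ (by rw [taus_length]; exact hm)]
  simp [taus]

lemma gei {α : Type*} (l : List α) {i j : ℕ} (hij : i = j) (hi : i < l.length)
    (hj : j < l.length) : l[i] = l[j] := by subst hij; rfl

lemma cand_facts {M : ℕ} (hM : 1 ≤ M) (u : Fin n) (m : ℕ) (hmu : m ≤ (T.sig u).length) :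
    ∃ ct : ℕ, ct ≤ T.D u ∧
      (∀ h : m < (T.sig u).length, ct + 1 = T.D ((T.sig u)[m])) ∧
      (m = (T.sig u).length → ct = T.D u) ∧
      cand M (data T M u) m ≤ (ct : ℤ) ∧
      (M : ℤ) * ((ct : ℤ) - cand M (data T M u) m) ≤ (T.D u : ℤ) - (ct : ℤ) := by
  by_cases hlt : m < (T.sig u).length
  · have hlight := T.sig_get_light hlt
    have hanc := hlight.2
    have hDc_le : T.D ((T.sig u)[m]) ≤ T.D u := T.anc_depth_le hanc
    have hDc_pos : 1 ≤ T.D ((T.sig u)[m]) := by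
      have := T.hD _ hlight.1.1
      omega
    have hcand : cand M (data T M u) m =
        (T.D u : ℤ) - fM M (tIdx M (T.D u + 1 - T.D ((T.sig u)[m]))) := by
      rw [cand, if_pos (by rw [pk_data]; exact hlt), pD_data, T.ptau_data M hlt]
    have hspec : (T.D u + 1 - T.D ((T.sig u)[m]) : ℕ) ≤
        fM M (tIdx M (T.D u + 1 - T.D ((T.sig u)[m]))) := tIdx_spec M _
    have happrox : M * fM M (tIdx M (T.D u + 1 - T.D ((T.sig u)[m]))) ≤
        (M + 1) * (T.D u + 1 - T.D ((T.sig u)[m])) :=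
      tIdx_approx M hM (by omega)
    have hctlt : (T.D ((T.sig u)[m]) - 1) + 1 = T.D ((T.sig u)[m]) := by omega
    refine ⟨T.D ((T.sig u)[m]) - 1, by omega, fun _ => hctlt, by omega, ?_, ?_⟩
    · rw [hcand]
      omega
    · rw [hcand]
      set F := fM M (tIdx M (T.D u + 1 - T.D ((T.sig u)[m]))) with hF
      have c1 : ((T.D ((T.sig u)[m]) - 1 : ℕ) : ℤ) = (T.D ((T.sig u)[m]) : ℤ) - 1 := by
        omega
      have c2 : ((T.D u + 1 - T.D ((T.sig u)[m]) : ℕ) : ℤ) =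
          (T.D u : ℤ) + 1 - (T.D ((T.sig u)[m]) : ℤ) := by omega
      have c3 : (M : ℤ) * (F : ℤ) ≤
          ((M : ℤ) + 1) * ((T.D u : ℤ) + 1 - (T.D ((T.sig u)[m]) : ℤ)) := by
        rw [← c2]
        exact_mod_cast happrox
      have c4 : ((M : ℤ) + 1) * ((T.D u : ℤ) + 1 - (T.D ((T.sig u)[m]) : ℤ)) =
          (M : ℤ) * ((T.D u : ℤ) + 1 - (T.D ((T.sig u)[m]) : ℤ)) +
          ((T.D u : ℤ) + 1 - (T.D ((T.sig u)[m]) : ℤ)) := by ring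
      have c5 : (M : ℤ) * (((T.D ((T.sig u)[m]) - 1 : ℕ) : ℤ) -
          ((T.D u : ℤ) - (F : ℤ))) =
          (M : ℤ) * (F : ℤ) -
          (M : ℤ) * ((T.D u : ℤ) + 1 - (T.D ((T.sig u)[m]) : ℤ)) := by
        rw [c1]; ring
      rw [c5, c1]
      linarith
  · have hmeq : m = (T.sig u).length := by omega
    refine ⟨T.D u, le_rfl, fun h => absurd h (by omega), fun _ => rfl, ?_, ?_⟩
    · rw [cand, if_neg (by rw [pk_data]; omega), pD_data]
    · rw [cand, if_neg (by rw [pk_data]; omega), pD_data]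
      simp

theorem est_correct {M : ℕ} (hM : 1 ≤ M) (u v : Fin n) :
    T.tdist u v ≤ (est M (data T M u) (data T M v) : ℤ) ∧
    (M : ℤ) * (est M (data T M u) (data T M v) : ℤ) ≤ ((M : ℤ) + 2) * T.tdist u v := by
  obtain ⟨m, hmdef⟩ : ∃ m, m = cpl (rks T u) (rks T v) := ⟨_, rfl⟩
  have hmu : m ≤ (T.sig u).length := by
    rw [hmdef, ← T.rks_length u]; exact cpl_le_left _ _
  have hmv : m ≤ (T.sig v).length := by
    rw [hmdef, ← T.rks_length v]; exact cpl_le_right _ _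
  obtain ⟨ctu, hctu_le, hctu_lt, hctu_eq, hcu_le, hcu_err⟩ := T.cand_facts hM u m hmu
  obtain ⟨ctv, hctv_le, hctv_lt, hctv_eq, hcv_le, hcv_err⟩ := T.cand_facts hM v m hmv
  -- locate the lca
  have hlca : T.D (T.lca u v) = min ctu ctv := by
    rcases Nat.lt_or_ge m (T.sig u).length with hu | hu <;>
      rcases Nat.lt_or_ge m (T.sig v).length with hv | hv
    · -- both exit
      have hne : (T.sig u)[m] ≠ (T.sig v)[m] := by
        have h := cpl_ne (rks T u) (rks T v)
          (by rw [← hmdef, rks_length]; exact hu) (by rw [← hmdef, rks_length]; exact hv)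
        rw [← hmdef, T.rks_getD hu, T.rks_getD hv] at h
        intro heq
        exact h (by rw [heq])
      have hlu := T.sig_get_light hu
      have hlv := T.sig_get_light hv
      have hDpu : T.D (T.parent ((T.sig u)[m])) + 1 = T.D ((T.sig u)[m]) :=
        T.hD _ hlu.1.1
      have hDpv : T.D (T.parent ((T.sig v)[m])) + 1 = T.D ((T.sig v)[m]) :=
        T.hD _ hlv.1.1
      have hkey : T.D (T.lca u v) =
          min (T.D (T.parent ((T.sig u)[m]))) (T.D (T.parent ((T.sig v)[m]))) := by
        cases m with
        | zero =>
          exact T.lca_exit_exit hlu.1 hlu.2 (T.top_parent_get_zero hu)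
            hlv.1 hlv.2 (T.top_parent_get_zero hv) hne
        | succ i =>
          have hpm : (T.sig u)[i]'(by omega) = (T.sig v)[i]'(by omega) :=
            T.matching u v i (by omega) (by omega) (by omega)
          have h2 := T.top_parent_get_succ (u := v) hv
          rw [← hpm] at h2
          exact T.lca_exit_exit hlu.1 hlu.2 (T.top_parent_get_succ hu)
            hlv.1 hlv.2 h2 hne
      have e1 := hctu_lt hu
      have e2 := hctv_lt hv
      omega
    · -- u exits, v on the chain
      have hmv' : m = (T.sig v).length := by omega
      have hlu := T.sig_get_light hu
      have hDpu : T.D (T.parent ((T.sig u)[m])) + 1 = T.D ((T.sig u)[m]) :=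
        T.hD _ hlu.1.1
      have e1 := hctu_lt hu
      have e2 := hctv_eq hmv'
      have hkey : T.D (T.lca u v) = min (T.D (T.parent ((T.sig u)[m]))) (T.D v) := by
        by_cases h0 : m = 0
        · subst h0
          exact T.lca_exit_chain hlu.1 hlu.2 (T.top_parent_get_zero hu)
            (T.top_of_sig_nil (by omega))
        · obtain ⟨i, rfl⟩ : ∃ i, m = i + 1 := ⟨m - 1, by omega⟩
          have hpm : (T.sig u)[i]'(by omega) = (T.sig v)[i]'(by omega) :=
            T.matching u v i (by omega) (by omega) (by omega)
          have htv : T.top v = (T.sig u)[i]'(by omega) :=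
            calc T.top v = (T.sig v)[(T.sig v).length - 1]'(by omega) :=
                  T.top_of_sig_last (by omega)
              _ = (T.sig v)[i]'(by omega) := gei _ (by omega) _ _
              _ = (T.sig u)[i]'(by omega) := hpm.symm
          exact T.lca_exit_chain hlu.1 hlu.2 (T.top_parent_get_succ hu) htv
      omega
    · -- v exits, u on the chain (symmetric)
      have hmu' : m = (T.sig u).length := by omega
      have hlv := T.sig_get_light hv
      have hDpv : T.D (T.parent ((T.sig v)[m])) + 1 = T.D ((T.sig v)[m]) :=
        T.hD _ hlv.1.1
      have e1 := hctv_lt hv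
      have e2 := hctu_eq hmu'
      have hkey' : T.D (T.lca v u) = min (T.D (T.parent ((T.sig v)[m]))) (T.D u) := by
        by_cases h0 : m = 0
        · subst h0
          exact T.lca_exit_chain hlv.1 hlv.2 (T.top_parent_get_zero hv)
            (T.top_of_sig_nil (by omega))
        · obtain ⟨i, rfl⟩ : ∃ i, m = i + 1 := ⟨m - 1, by omega⟩
          have hpm : (T.sig u)[i]'(by omega) = (T.sig v)[i]'(by omega) :=
            T.matching u v i (by omega) (by omega) (by omega)
          have htu : T.top u = (T.sig v)[i]'(by omega) :=
            calc T.top u = (T.sig u)[(T.sig u).length - 1]'(by omega) :=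
                  T.top_of_sig_last (by omega)
              _ = (T.sig u)[i]'(by omega) := gei _ (by omega) _ _
              _ = (T.sig v)[i]'(by omega) := hpm
          exact T.lca_exit_chain hlv.1 hlv.2 (T.top_parent_get_succ hv) htu
      have hkey : T.D (T.lca u v) = min (T.D (T.parent ((T.sig v)[m]))) (T.D u) := by
        rw [T.lca_comm]; exact hkey'
      omega
    · -- both on the chain
      have hmu' : m = (T.sig u).length := by omega
      have hmv' : m = (T.sig v).length := by omega
      have e1 := hctu_eq hmu'
      have e2 := hctv_eq hmv'
      have hkey : T.D (T.lca u v) = min (T.D u) (T.D v) := by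
        by_cases h0 : m = 0
        · exact T.lca_top_top (t := T.root) (T.top_of_sig_nil (by omega))
            (T.top_of_sig_nil (by omega))
        · obtain ⟨i, rfl⟩ : ∃ i, m = i + 1 := ⟨m - 1, by omega⟩
          have hpm : (T.sig u)[i]'(by omega) = (T.sig v)[i]'(by omega) :=
            T.matching u v i (by omega) (by omega) (by omega)
          have htu : T.top u = (T.sig u)[i]'(by omega) :=
            calc T.top u = (T.sig u)[(T.sig u).length - 1]'(by omega) :=
                  T.top_of_sig_last (by omega)
              _ = (T.sig u)[i]'(by omega) := gei _ (by omega) _ _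
          have htv : T.top v = (T.sig u)[i]'(by omega) :=
            calc T.top v = (T.sig v)[(T.sig v).length - 1]'(by omega) :=
                  T.top_of_sig_last (by omega)
              _ = (T.sig v)[i]'(by omega) := gei _ (by omega) _ _
              _ = (T.sig u)[i]'(by omega) := hpm.symm
          exact T.lca_top_top htu htv
      omega
  -- arithmetic
  have hEdef : est M (data T M u) (data T M v) =
      ((T.D u : ℤ) + (T.D v : ℤ) -
        2 * min (cand M (data T M u) m) (cand M (data T M v) m)).toNat := by
    rw [est, pD_data, pD_data, pranks_data, pranks_data, ← hmdef]
  set CU := cand M (data T M u) m with hCU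
  set CV := cand M (data T M v) m with hCV
  have hLu : T.D (T.lca u v) ≤ T.D u := T.lca_depth_le_left u v
  have hLv : T.D (T.lca u v) ≤ T.D v := T.lca_depth_le_right u v
  have hminle : min CU CV ≤ (T.D (T.lca u v) : ℤ) := by
    have h1 : min CU CV ≤ min (ctu : ℤ) (ctv : ℤ) := min_le_min hcu_le hcv_le
    rw [hlca]
    push_cast
    exact h1
  have htd : T.tdist u v = (T.D u : ℤ) + T.D v - 2 * T.D (T.lca u v) := rfl
  have hLu : T.D (T.lca u v) ≤ T.D u := T.lca_depth_le_left u v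
  have hLv : T.D (T.lca u v) ≤ T.D v := T.lca_depth_le_right u v
  have hLu' : (T.D (T.lca u v) : ℤ) ≤ (T.D u : ℤ) := by exact_mod_cast hLu
  have hLv' : (T.D (T.lca u v) : ℤ) ≤ (T.D v : ℤ) := by exact_mod_cast hLv
  have htd_nn : 0 ≤ T.tdist u v := by rw [htd]; omega
  have hEz : (est M (data T M u) (data T M v) : ℤ) =
      (T.D u : ℤ) + (T.D v : ℤ) - 2 * min CU CV := by
    rw [hEdef]
    rw [Int.toNat_of_nonneg (by linarith)]
  have hMnn : (0 : ℤ) ≤ (M : ℤ) := by positivity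
  have sideU : (M : ℤ) * ((T.D (T.lca u v) : ℤ) - CU) ≤
      (T.D u : ℤ) + T.D v - 2 * T.D (T.lca u v) := by
    have e1 : (T.D (T.lca u v) : ℤ) ≤ (ctu : ℤ) := by
      have : T.D (T.lca u v) ≤ ctu := by omega
      exact_mod_cast this
    have e2 : (0 : ℤ) ≤ (M : ℤ) * ((ctu : ℤ) - (T.D (T.lca u v) : ℤ)) :=
      mul_nonneg hMnn (by linarith)
    have e3 : (ctu : ℤ) ≤ (T.D u : ℤ) := by exact_mod_cast hctu_le
    have e4 : (M : ℤ) * ((T.D (T.lca u v) : ℤ) - CU) =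
        (M : ℤ) * ((ctu : ℤ) - CU) - (M : ℤ) * ((ctu : ℤ) - (T.D (T.lca u v) : ℤ)) := by
      ring
    linarith [hcu_err]
  have sideV : (M : ℤ) * ((T.D (T.lca u v) : ℤ) - CV) ≤
      (T.D u : ℤ) + T.D v - 2 * T.D (T.lca u v) := by
    have e1 : (T.D (T.lca u v) : ℤ) ≤ (ctv : ℤ) := by
      have : T.D (T.lca u v) ≤ ctv := by omega
      exact_mod_cast this
    have e2 : (0 : ℤ) ≤ (M : ℤ) * ((ctv : ℤ) - (T.D (T.lca u v) : ℤ)) :=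
      mul_nonneg hMnn (by linarith)
    have e3 : (ctv : ℤ) ≤ (T.D v : ℤ) := by exact_mod_cast hctv_le
    have e4 : (M : ℤ) * ((T.D (T.lca u v) : ℤ) - CV) =
        (M : ℤ) * ((ctv : ℤ) - CV) - (M : ℤ) * ((ctv : ℤ) - (T.D (T.lca u v) : ℤ)) := by
      ring
    linarith [hcv_err]
  have k2 : (M : ℤ) * ((T.D (T.lca u v) : ℤ) - min CU CV) ≤
      (T.D u : ℤ) + T.D v - 2 * T.D (T.lca u v) := by
    rcases le_total CU CV with h | h
    · rw [min_eq_left h]; exact sideU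
    · rw [min_eq_right h]; exact sideV
  constructor
  · rw [hEz, htd]
    linarith
  · have expand : (M : ℤ) * (est M (data T M u) (data T M v) : ℤ) =
        (M : ℤ) * ((T.D u : ℤ) + T.D v - 2 * T.D (T.lca u v)) +
          2 * ((M : ℤ) * ((T.D (T.lca u v) : ℤ) - min CU CV)) := by
      rw [hEz]; ring
    rw [htd, expand]
    linarith

end RTree
end Correct

section LengthBound

lemma lenN_le_lin (x : ℕ) : lenN x ≤ 2 * x + 5 := by
  have h1 : 2 ^ (natBits (x+1)).length ≤ 2 * (x+1) := natBits_len _ (by omega)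
  have h2 : x + 1 < 2 ^ (x+1) := Nat.lt_two_pow_self
  have h3 : 2 ^ (natBits (x+1)).length ≤ 2 ^ (x+2) := by
    calc 2 ^ (natBits (x+1)).length ≤ 2 * (x+1) := h1
      _ ≤ 2 * 2 ^ (x+1) := by omega
      _ = 2 ^ (x+2) := by ring
  have h4 : (natBits (x+1)).length ≤ x + 2 :=
    (Nat.pow_le_pow_iff_right (by norm_num)).mp h3
  rw [lenN]
  omega

lemma one_le_prod {l : List ℕ} (h : ∀ x ∈ l, 1 ≤ x) : 1 ≤ l.prod := by
  induction l with
  | nil => simp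
  | cons a t ih =>
    rw [List.prod_cons]
    have ha := h a (by simp)
    have ht := ih (fun x hx => h x (by simp [hx]))
    calc 1 = 1 * 1 := by ring
      _ ≤ a * t.prod := Nat.mul_le_mul ha ht

lemma sum_lenN_lin (l : List ℕ) : (l.map lenN).sum ≤ 5 * l.length + 2 * l.sum := by
  induction l with
  | nil => simp
  | cons a t ih =>
    simp only [List.map_cons, List.sum_cons, List.length_cons]
    have := lenN_le_lin a
    omega

lemma sum_lenN_prod (l : List ℕ) (h1 : ∀ x ∈ l, 1 ≤ x) :
    ((l.map lenN).sum : ℝ) ≤ 5 * l.length + 2 * Real.logb 2 (l.prod) := by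
  induction l with
  | nil => simp
  | cons a t ih =>
    have ha : 1 ≤ a := h1 a (by simp)
    have ht : ∀ x ∈ t, 1 ≤ x := fun x hx => h1 x (by simp [hx])
    have hihyp := ih ht
    have htp : 1 ≤ t.prod := one_le_prod ht
    have hlenN : (lenN a : ℝ) ≤ 2 * Real.logb 2 (a+1) + 3 := lenN_le_real a
    have hmono : Real.logb 2 ((a : ℝ)+1) ≤ Real.logb 2 (2*(a : ℝ)) := by
      apply Real.logb_le_logb_of_le (by norm_num) (by positivity)
      have : (1:ℝ) ≤ (a:ℝ) := by exact_mod_cast ha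
      linarith
    have hsplit : Real.logb 2 (2*(a:ℝ)) = 1 + Real.logb 2 (a:ℝ) := by
      rw [Real.logb_mul (by norm_num) (by positivity)]
      rw [Real.logb_self_eq_one (by norm_num)]
    have haR : (0:ℝ) < (a:ℝ) := by exact_mod_cast ha
    have htpR : (0:ℝ) < ((t.prod : ℕ):ℝ) := by exact_mod_cast htp
    simp only [List.map_cons, List.sum_cons, List.length_cons, List.prod_cons]
    push_cast
    rw [Real.logb_mul (ne_of_gt haR) (ne_of_gt (by push_cast at htpR ⊢; exact htpR))]
    push_cast at hihyp
    linarith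

variable {n : ℕ} (T : ATD.RTree n)

theorem label_length {M : ℕ} (hn : 2 ≤ n) (hM : 1 ≤ M) (u : Fin n) :
    ((encL (RTree.data T M u)).length : ℝ) ≤ (40 * M + 60) * Real.logb 2 n := by
  set L := Real.logb 2 n with hL
  have hL1 : 1 ≤ L := by
    rw [hL]
    calc (1:ℝ) = Real.logb 2 2 := (Real.logb_self_eq_one (by norm_num)).symm
      _ ≤ Real.logb 2 n :=
        Real.logb_le_logb_of_le (by norm_num) (by norm_num) (by exact_mod_cast hn)
  -- basic quantities
  set k := (T.sig u).length with hk
  have hklog : k ≤ Nat.log 2 n := by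
    have h1 := T.pow_sig_len u
    have h2 := T.size_pos u
    have h3 : 2 ^ k ≤ n := by
      calc 2 ^ k = 2 ^ k * 1 := by ring
        _ ≤ 2 ^ k * T.size u := Nat.mul_le_mul_left _ h2
        _ ≤ n := h1
    exact (Nat.le_log_iff_pow_le (by norm_num) (by omega)).mpr h3
  have hlogL : (Nat.log 2 n : ℝ) ≤ L := Real.natLog_le_logb n 2
  have hkL : (k : ℝ) ≤ L := by
    have : (k : ℝ) ≤ (Nat.log 2 n : ℝ) := by exact_mod_cast hklog
    linarith
  have hDu : T.D u + 1 ≤ n := T.D_lt u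
  -- t1 bound
  have ht1 : (RTree.taus T M u).headD 0 ≤ 4 * M * (Nat.log 2 n + 1) := by
    rcases hsig : T.sig u with _ | ⟨c, rest⟩
    · simp [RTree.taus, hsig]
    · have hc : c ∈ T.sig u := by rw [hsig]; simp
      have hanc := (T.mem_sig hc).2
      have hle : T.D u + 1 - T.D c ≤ n := by omega
      have h1 : (RTree.taus T M u).headD 0 = tIdx M (T.D u + 1 - T.D c) := by
        simp [RTree.taus, hsig]
      rw [h1]
      calc tIdx M (T.D u + 1 - T.D c) ≤ tIdx M n := tIdx_mono M hle
        _ ≤ 4 * M * (Nat.log 2 n + 1) := tIdx_le M hM (by omega)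
  set t1 := (RTree.taus T M u).headD 0 with ht1def
  have ht1L : (t1 : ℝ) ≤ 8 * M * L := by
    have h1 : (t1 : ℝ) ≤ 4 * M * ((Nat.log 2 n : ℝ) + 1) := by exact_mod_cast ht1
    have hM1 : (1:ℝ) ≤ (M:ℝ) := by exact_mod_cast hM
    nlinarith [hlogL, hL1]
  -- ranks bounds
  have hrk_ge : ∀ x ∈ RTree.rks T u, 1 ≤ x := by
    intro x hx
    rw [RTree.rks] at hx
    obtain ⟨c, hc, rfl⟩ := List.mem_map.mp hx
    exact T.rank_pos (T.mem_sig hc).1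
  have hrk_prod : (RTree.rks T u).prod ≤ n := by
    have h1 := T.prod_rank_size u
    have h2 := T.size_pos (T.top u)
    calc (RTree.rks T u).prod = (RTree.rks T u).prod * 1 := by ring
      _ ≤ (RTree.rks T u).prod * T.size (T.top u) := Nat.mul_le_mul_left _ h2
      _ ≤ n := h1
  have hrk_len : (RTree.rks T u).length = k := T.rks_length u
  have hrkS : (((RTree.rks T u).map lenN).sum : ℝ) ≤ 5 * L + 2 * L := by
    have h1 := sum_lenN_prod (RTree.rks T u) hrk_ge
    have h2 : Real.logb 2 ((RTree.rks T u).prod : ℝ) ≤ L := by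
      rw [hL]
      apply Real.logb_le_logb_of_le (by norm_num)
      · have := one_le_prod hrk_ge
        exact_mod_cast Nat.lt_of_lt_of_le Nat.zero_lt_one this
      · exact_mod_cast hrk_prod
    rw [hrk_len] at h1
    have h3 : (5:ℝ) * k ≤ 5 * L := by linarith
    linarith
  -- gaps bounds
  have hgp_sum : (RTree.gps T M u).sum ≤ t1 :=
    zip_sub_sum_le (RTree.taus T M u) (T.taus_mono M u)
  have hgp_len : (RTree.gps T M u).length ≤ k := by
    rw [RTree.gps, List.length_zipWith, RTree.taus_length]
    omega
  have hgpS : (((RTree.gps T M u).map lenN).sum : ℝ) ≤ 5 * L + 2 * (8 * M * L) := by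
    have h1 := sum_lenN_lin (RTree.gps T M u)
    have h2 : ((RTree.gps T M u).map lenN).sum ≤ 5 * k + 2 * t1 := by
      have := hgp_len
      have := hgp_sum
      omega
    have h3 : (((RTree.gps T M u).map lenN).sum : ℝ) ≤ 5 * (k:ℝ) + 2 * (t1:ℝ) := by
      exact_mod_cast h2
    nlinarith [hkL, ht1L]
  -- single items
  have hDuL : (lenN (T.D u) : ℝ) ≤ 2 * L + 3 := by
    have h1 := lenN_le_real (T.D u)
    have h2 : Real.logb 2 ((T.D u : ℝ) + 1) ≤ L := by
      rw [hL]
      apply Real.logb_le_logb_of_le (by norm_num) (by positivity)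
      have : (T.D u : ℝ) + 1 ≤ (n : ℝ) := by exact_mod_cast hDu
      linarith
    linarith
  have hkN : (lenN k : ℝ) ≤ 2 * L + 5 := by
    have h1 := lenN_le_lin k
    have : (lenN k : ℝ) ≤ 2 * (k:ℝ) + 5 := by exact_mod_cast h1
    linarith
  have ht1N : (lenN t1 : ℝ) ≤ 16 * M * L + 5 := by
    have h1 := lenN_le_lin t1
    have : (lenN t1 : ℝ) ≤ 2 * (t1:ℝ) + 5 := by exact_mod_cast h1
    linarith
  -- length of data list
  have hdata_len : (RTree.data T M u).length = 3 + k + (RTree.gps T M u).length := by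
    simp only [RTree.data, List.length_cons, List.length_append, hrk_len]
    omega
  have hdata_len_le : (RTree.data T M u).length ≤ 3 + 2 * k := by
    rw [hdata_len]
    have := hgp_len
    omega
  have hheadN : (lenN (RTree.data T M u).length : ℝ) ≤ 4 * L + 11 := by
    have h1 := lenN_le_lin (RTree.data T M u).length
    have h2 : lenN (RTree.data T M u).length ≤ 2 * (3 + 2 * k) + 5 := by
      have := lenN_le_lin (RTree.data T M u).length
      have h3 : lenN (RTree.data T M u).length ≤ 2 * (RTree.data T M u).length + 5 := this
      omega
    have h4 : (lenN (RTree.data T M u).length : ℝ) ≤ 2 * (3 + 2 * (k:ℝ)) + 5 := by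
      exact_mod_cast h2
    linarith
  -- total
  have htot : (encL (RTree.data T M u)).length =
      lenN (RTree.data T M u).length + ((RTree.data T M u).map lenN).sum :=
    encL_length _
  have hsum : ((RTree.data T M u).map lenN).sum =
      lenN (T.D u) + lenN k + lenN t1 +
        (((RTree.rks T u).map lenN).sum + ((RTree.gps T M u).map lenN).sum) := by
    simp only [RTree.data, List.map_cons, List.sum_cons, List.map_append, List.sum_append]
    rw [← hk, ← ht1def]
    omega
  have hM1 : (1:ℝ) ≤ (M:ℝ) := by exact_mod_cast hM
  have hMLL : L ≤ (M:ℝ) * L := by nlinarith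
  rw [htot, hsum]
  simp only [Nat.cast_add]
  linarith [hrkS, hgpS, hDuL, hkN, ht1N, hheadN, hL1, hM1, hMLL]

end LengthBound

section DecodeInv

noncomputable def decL (x : List Bool) : List ℕ :=
  if h : ∃ l : List ℕ, encL l = x then h.choose else []

lemma decL_encL (l : List ℕ) : decL (encL l) = l := by
  have h : ∃ l' : List ℕ, encL l' = encL l := ⟨l, rfl⟩
  rw [decL, dif_pos h]
  exact encL_injective h.choose_spec

end DecodeInv

end ATD


theorem approximate_tree_distance_upper_bound (ε : ℝ) (hε : 0 < ε) :
    ∃ C : ℝ, 0 < C ∧ ∀ n : ℕ, 2 ≤ n →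
      ∃ d : List Bool → List Bool → ℕ,
        ∀ G : SimpleGraph (Fin n), G.IsTree →
          ∃ e : Fin n → List Bool,
            (∀ u : Fin n, ((e u).length : ℝ) ≤ C * Real.logb 2 n) ∧
            ∀ u v : Fin n,
              G.dist u v ≤ d (e u) (e v) ∧
              (d (e u) (e v) : ℝ) ≤ (1 + ε) * (G.dist u v : ℝ) := by
  classical
  set M : ℕ := max 1 ⌈2 / ε⌉₊ with hMdef
  have hM1 : 1 ≤ M := le_max_left _ _
  have hMR : 2 / ε ≤ (M : ℝ) := by
    calc 2 / ε ≤ (⌈2 / ε⌉₊ : ℝ) := Nat.le_ceil _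
      _ ≤ (M : ℝ) := by exact_mod_cast le_max_right 1 _
  have hεM : 2 ≤ ε * (M : ℝ) := by
    rw [div_le_iff₀ hε] at hMR
    linarith [hMR]
  refine ⟨40 * (M : ℝ) + 60, by positivity, ?_⟩
  intro n hn
  refine ⟨fun x y => ATD.est M (ATD.decL x) (ATD.decL y), ?_⟩
  intro G hG
  obtain ⟨T, hT⟩ := ATD.exists_rtree (by omega) hG
  refine ⟨fun u => ATD.encL (ATD.RTree.data T M u), ?_, ?_⟩
  · intro u
    exact ATD.label_length T hn hM1 u
  · intro u v
    obtain ⟨h1, h2⟩ := ATD.RTree.est_correct T hM1 u v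
    have hdist := hT u v
    constructor
    · show G.dist u v ≤ ATD.est M (ATD.decL (ATD.encL (ATD.RTree.data T M u)))
        (ATD.decL (ATD.encL (ATD.RTree.data T M v)))
      rw [ATD.decL_encL, ATD.decL_encL]
      have h3 : (G.dist u v : ℤ) ≤
          (ATD.est M (ATD.RTree.data T M u) (ATD.RTree.data T M v) : ℤ) := by
        rw [hdist]; exact h1
      exact_mod_cast h3
    · show (ATD.est M (ATD.decL (ATD.encL (ATD.RTree.data T M u)))
        (ATD.decL (ATD.encL (ATD.RTree.data T M v))) : ℝ) ≤ (1 + ε) * (G.dist u v : ℝ)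
      rw [ATD.decL_encL, ATD.decL_encL]
      have h3 : (M:ℤ) * (ATD.est M (ATD.RTree.data T M u) (ATD.RTree.data T M v) : ℤ) ≤
          ((M:ℤ)+2) * (G.dist u v : ℤ) := by
        rw [hdist]; exact h2
      have h2' : (M : ℝ) * (ATD.est M (ATD.RTree.data T M u) (ATD.RTree.data T M v) : ℝ) ≤
          ((M : ℝ) + 2) * (G.dist u v : ℝ) := by exact_mod_cast h3
      have hMpos : (0:ℝ) < (M:ℝ) := by exact_mod_cast hM1
      have hd0 : (0:ℝ) ≤ (G.dist u v : ℝ) := by positivity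
      have key : ((M:ℝ)+2) * (G.dist u v : ℝ) ≤ (M:ℝ) * ((1+ε) * (G.dist u v : ℝ)) := by
        nlinarith [hεM, hd0]
      exact le_of_mul_le_mul_left (h2'.trans key) hMpos
end
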